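/- arXiv:1912.05379 — 2 statements merged into one kernel-verified Lean document; each statement's English description precedes it below -/
import Mathlib

section
/- Let ε ≥ δ > 0. The set of aperiodic (ε,δ)-Delone sets in ℝⁿ contains a countable intersection of open dense subsets of the space Del_{ε,δ} of all (ε,δ)-Delone sets equipped with the local rubber topology; i.e., aperiodicity is topologically generic in Del_{ε,δ}. -/
open Metric Pointwise

set_option maxHeartbeats 1000000

/-- `S` is `δ`-separated. -/
def IsSeparated' {n : ℕ} (δ : ℝ) (S : Set (EuclideanSpace ℝ (Fin n))) : Prop :=
  ∀ x ∈ S, ∀ y ∈ S, x ≠ y → δ ≤ dist x y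

/-- `S` is an `(ε,δ)`-Delone subset of ℝⁿ: `ε`-relatively dense and `δ`-separated. -/
def IsDelone {n : ℕ} (ε δ : ℝ) (S : Set (EuclideanSpace ℝ (Fin n))) : Prop :=
  (∀ x : EuclideanSpace ℝ (Fin n), ∃ y ∈ S, dist x y ≤ ε) ∧ IsSeparated' δ S

/-- The space of `(ε,δ)`-Delone subsets of ℝⁿ. -/
def Del (n : ℕ) (ε δ : ℝ) : Set (Set (EuclideanSpace ℝ (Fin n))) :=
  {S | IsDelone ε δ S}

/-- The basic entourage `N_r` of the local rubber uniformity. -/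
def Nrel (n : ℕ) (r : ℝ) (S S' : Set (EuclideanSpace ℝ (Fin n))) : Prop :=
  S ∩ ball (0 : EuclideanSpace ℝ (Fin n)) r ⊆ S' + ball (0 : EuclideanSpace ℝ (Fin n)) (1 / r) ∧
  S' ∩ ball (0 : EuclideanSpace ℝ (Fin n)) r ⊆ S + ball (0 : EuclideanSpace ℝ (Fin n)) (1 / r)

/-- The translate `S - v` of `S`. -/
def tr {n : ℕ} (v : EuclideanSpace ℝ (Fin n)) (S : Set (EuclideanSpace ℝ (Fin n))) :
    Set (EuclideanSpace ℝ (Fin n)) :=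
  (fun x => x - v) '' S

/-- `S` is aperiodic: no nonzero translation fixes it. -/
def IsAperiodicSet {n : ℕ} (S : Set (EuclideanSpace ℝ (Fin n))) : Prop :=
  ∀ v : EuclideanSpace ℝ (Fin n), v ≠ 0 → tr v S ≠ S

/-- `S` is periodic: its translation symmetry group is a cocompact lattice, i.e. it contains
`n` linearly independent periods. -/
def IsPeriodicSet {n : ℕ} (S : Set (EuclideanSpace ℝ (Fin n))) : Prop :=
  ∃ v : Fin n → EuclideanSpace ℝ (Fin n), LinearIndependent ℝ v ∧ ∀ i, tr (v i) S = S

/-- `S'` belongs to the hull (closure of the translation orbit) of `S`: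
every basic rubber neighbourhood of `S'` meets the orbit of `S`. -/
def InHull {n : ℕ} (S S' : Set (EuclideanSpace ℝ (Fin n))) : Prop :=
  ∀ r : ℝ, 0 < r → ∃ v : EuclideanSpace ℝ (Fin n), Nrel n r (tr v S) S'

/-- `S` is almost chaotic: periodic Delone sets are dense in the hull of `S`. -/
def IsAlmostChaotic {n : ℕ} (ε δ : ℝ) (S : Set (EuclideanSpace ℝ (Fin n))) : Prop :=
  ∀ S' ∈ Del n ε δ, InHull S S' → ∀ r : ℝ, 0 < r →
    ∃ P ∈ Del n ε δ, IsPeriodicSet P ∧ InHull S P ∧ Nrel n r S' P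

/-- `F` is an open subset of `Del n ε δ` in the local rubber topology. -/
def IsOpenInDel (n : ℕ) (ε δ : ℝ) (F : Set (Set (EuclideanSpace ℝ (Fin n)))) : Prop :=
  ∀ S ∈ F, ∃ r : ℝ, 0 < r ∧ ∀ S' ∈ Del n ε δ, Nrel n r S S' → S' ∈ F

/-- `F` is dense in `Del n ε δ` in the local rubber topology. -/
def IsDenseInDel (n : ℕ) (ε δ : ℝ) (F : Set (Set (EuclideanSpace ℝ (Fin n)))) : Prop :=
  ∀ S ∈ Del n ε δ, ∀ r : ℝ, 0 < r → ∃ S' ∈ F, Nrel n r S S'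

namespace AperiodicAux

variable {n : ℕ}

local notation "E" => EuclideanSpace ℝ (Fin n)

/-- Coordinate bound for the euclidean norm. -/
lemma coord_le_norm (x : E) (i : Fin n) : |x i| ≤ ‖x‖ := by
  rw [EuclideanSpace.norm_eq]
  have h1 : |x i| = Real.sqrt (‖x i‖ ^ 2) := by
    rw [Real.sqrt_sq_eq_abs]; simp [abs_abs]
  rw [h1]
  apply Real.sqrt_le_sqrt
  apply Finset.single_le_sum (f := fun j => ‖x j‖ ^ 2) (fun j _ => by positivity) (Finset.mem_univ i)

lemma norm_le_of_coords (x : E) (M : ℝ) (hM : 0 ≤ M) (h : ∀ i, |x i| ≤ M) :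
    ‖x‖ ≤ (n + 1) * M := by
  rw [EuclideanSpace.norm_eq]
  have h1 : (∑ i : Fin n, ‖x i‖ ^ 2) ≤ n * M ^ 2 := by
    calc (∑ i : Fin n, ‖x i‖ ^ 2) ≤ ∑ _i : Fin n, M ^ 2 := by
          apply Finset.sum_le_sum
          intro i _
          have := h i
          have : ‖x i‖ ≤ M := by simpa [Real.norm_eq_abs] using h i
          nlinarith [norm_nonneg (x i)]
      _ = n * M ^ 2 := by simp [mul_comm]
  calc Real.sqrt (∑ i : Fin n, ‖x i‖ ^ 2) ≤ Real.sqrt (n * M ^ 2) := Real.sqrt_le_sqrt h1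
    _ ≤ (n + 1) * M := by
        rw [show ((n : ℝ) + 1) * M = Real.sqrt (((n : ℝ) + 1) ^ 2 * M ^ 2) by
          rw [← mul_pow, Real.sqrt_sq (by positivity)]]
        apply Real.sqrt_le_sqrt
        have : (n : ℝ) ≤ ((n : ℝ) + 1) ^ 2 := by nlinarith [Nat.cast_nonneg (α := ℝ) n]
        nlinarith [sq_nonneg M, Nat.cast_nonneg (α := ℝ) n]

/-- Zorn: maximal separated extension within a region. -/
lemma exists_maximal_sep (δ : ℝ) (hδ : 0 < δ) (base Ω : Set E)
    (hbase : IsSeparated' δ base) :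
    ∃ T ⊆ Ω, IsSeparated' δ (base ∪ T) ∧ ∀ x ∈ Ω, ∃ y ∈ base ∪ T, dist x y < δ := by
  set 𝒮 : Set (Set E) := {T | T ⊆ Ω ∧ IsSeparated' δ (base ∪ T)} with h𝒮
  have hchain : ∀ c ⊆ 𝒮, IsChain (fun x1 x2 => x1 ⊆ x2) c → c.Nonempty →
      ∃ ub ∈ 𝒮, ∀ s ∈ c, s ⊆ ub := by
    intro c hc hchain hne
    refine ⟨⋃₀ c, ⟨?_, ?_⟩, fun s hs => Set.subset_sUnion_of_mem hs⟩
    · intro x hx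
      obtain ⟨t, ht, hxt⟩ := hx
      exact (hc ht).1 hxt
    · intro x hx y hy hxy
      rcases hx with hx | ⟨t1, ht1, hx⟩
      · rcases hy with hy | ⟨t2, ht2, hy⟩
        · exact hbase x hx y hy hxy
        · exact (hc ht2).2 x (Or.inl hx) y (Or.inr hy) hxy
      · rcases hy with hy | ⟨t2, ht2, hy⟩
        · exact (hc ht1).2 x (Or.inr hx) y (Or.inl hy) hxy
        · rcases hchain.total ht1 ht2 with h | h
          · exact (hc ht2).2 x (Or.inr (h hx)) y (Or.inr hy) hxy
          · exact (hc ht1).2 x (Or.inr hx) y (Or.inr (h hy)) hxy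
  have h0 : (∅ : Set E) ∈ 𝒮 := ⟨Set.empty_subset _, by simpa using hbase⟩
  obtain ⟨T, -, hTmax⟩ := zorn_subset_nonempty 𝒮 hchain ∅ h0
  refine ⟨T, hTmax.1.1, hTmax.1.2, ?_⟩
  intro x hx
  by_contra hcon
  push_neg at hcon
  -- hcon : ∀ y ∈ base ∪ T, δ ≤ dist x y
  have hxT : x ∉ T := fun hxT => by
    have := hcon x (Or.inr hxT); simp at this; linarith
  have hT' : insert x T ∈ 𝒮 := by
    constructor
    · exact Set.insert_subset hx hTmax.1.1
    · intro a ha b hb hab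
      rw [Set.union_insert, Set.mem_insert_iff] at ha hb
      rcases ha with rfl | ha
      · rcases hb with rfl | hb
        · exact absurd rfl hab
        · exact hcon b hb
      · rcases hb with rfl | hb
        · rw [dist_comm]; exact hcon a ha
        · exact hTmax.1.2 a ha b hb hab
  have := hTmax.2 hT' (Set.subset_insert x T)
  exact hxT (this (Set.mem_insert x T))


section Lattice

variable (n : ℕ) (M : ℝ)

/-- The lattice `(Mℤ)ⁿ`. -/
def latSet : Set (EuclideanSpace ℝ (Fin n)) :=
  {x | ∀ i, ∃ z : ℤ, x i = M * z}

variable {n M}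

lemma latSet_zero : (0 : EuclideanSpace ℝ (Fin n)) ∈ latSet n M :=
  fun i => ⟨0, by simp⟩

lemma latSet_neg {u : EuclideanSpace ℝ (Fin n)} (hu : u ∈ latSet n M) : -u ∈ latSet n M := by
  intro i
  obtain ⟨z, hz⟩ := hu i
  exact ⟨-z, by simp [hz]⟩

lemma latSet_add {u v : EuclideanSpace ℝ (Fin n)} (hu : u ∈ latSet n M) (hv : v ∈ latSet n M) :
    u + v ∈ latSet n M := by
  intro i
  obtain ⟨z, hz⟩ := hu i
  obtain ⟨z', hz'⟩ := hv i
  exact ⟨z + z', by push_cast; simp [PiLp.add_apply, hz, hz']; ring⟩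

lemma latSet_norm_ge (hM : 0 < M) {u : EuclideanSpace ℝ (Fin n)} (hu : u ∈ latSet n M)
    (hne : u ≠ 0) : M ≤ ‖u‖ := by
  have : ∃ i, u i ≠ 0 := by
    by_contra hc
    push_neg at hc
    exact hne (PiLp.ext fun i => by simpa using hc i)
  obtain ⟨i, hi⟩ := this
  obtain ⟨z, hz⟩ := hu i
  have hzne : z ≠ 0 := by rintro rfl; simp at hz; exact hi hz
  have h1 : M ≤ |u i| := by
    rw [hz, abs_mul, abs_of_pos hM]
    have : (1 : ℝ) ≤ |(z : ℝ)| := by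
      rw [← Int.cast_abs]
      exact_mod_cast Int.one_le_abs hzne
    nlinarith
  exact h1.trans (coord_le_norm u i)

/-- A set is periodic w.r.t. the lattice. -/
def LatPeriodic (A : Set (EuclideanSpace ℝ (Fin n))) : Prop :=
  ∀ u ∈ latSet n M, ∀ x, x + u ∈ A ↔ x ∈ A

lemma latPeriodic_mem_sub {A : Set (EuclideanSpace ℝ (Fin n))} (hA : LatPeriodic (M := M) A)
    {u : EuclideanSpace ℝ (Fin n)} (hu : u ∈ latSet n M) {a : EuclideanSpace ℝ (Fin n)}
    (ha : a ∈ A) : a - u ∈ A := by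
  have := (hA u hu (a - u)).mp
  simp only [sub_add_cancel] at this
  exact this ha

/-- Reduce any point into the fundamental cube by a lattice vector. -/
lemma latSet_reduce (hM : 0 < M) (x : EuclideanSpace ℝ (Fin n)) :
    ∃ u ∈ latSet n M, ‖x + u‖ ≤ (n + 1) * M := by
  classical
  set u : EuclideanSpace ℝ (Fin n) := WithLp.toLp 2 (fun i => -(M * ⌊x i / M⌋)) with hu
  refine ⟨u, fun i => ⟨-⌊x i / M⌋, by rw [hu, PiLp.toLp_apply]; push_cast; ring⟩, ?_⟩
  apply norm_le_of_coords _ M hM.le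
  intro i
  have h1 : (x + u) i = x i - M * ⌊x i / M⌋ := by
    rw [hu]; simp [PiLp.add_apply]; ring
  rw [h1]
  have h2 : (0:ℝ) ≤ x i / M - ⌊x i / M⌋ := by
    linarith [Int.floor_le (x i / M)]
  have h3 : x i / M - ⌊x i / M⌋ < 1 := by
    linarith [Int.lt_floor_add_one (x i / M)]
  have hxi : x i - M * ⌊x i / M⌋ = M * (x i / M - ⌊x i / M⌋) := by
    field_simp
  rw [hxi, abs_of_nonneg (by positivity)]
  nlinarith

/-- Zorn for periodic separated sets. -/
lemma exists_maximal_periodic (δ : ℝ) (hδ : 0 < δ) (hMδ : δ ≤ M) (seed : Set (EuclideanSpace ℝ (Fin n)))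
    (hseedper : LatPeriodic (M := M) seed) (hseedsep : IsSeparated' δ seed) :
    ∃ A, seed ⊆ A ∧ IsSeparated' δ A ∧ LatPeriodic (M := M) A ∧
      ∀ x, ∃ a ∈ A, dist x a < δ := by
  have hM : 0 < M := lt_of_lt_of_le hδ hMδ
  set 𝒮 : Set (Set (EuclideanSpace ℝ (Fin n))) :=
    {A | seed ⊆ A ∧ IsSeparated' δ A ∧ LatPeriodic (M := M) A} with h𝒮
  have hchain : ∀ c ⊆ 𝒮, IsChain (fun x1 x2 => x1 ⊆ x2) c → c.Nonempty →
      ∃ ub ∈ 𝒮, ∀ s ∈ c, s ⊆ ub := by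
    intro c hc hchain hne
    obtain ⟨t0, ht0⟩ := hne
    refine ⟨⋃₀ c, ⟨?_, ?_, ?_⟩, fun s hs => Set.subset_sUnion_of_mem hs⟩
    · exact (hc ht0).1.trans (Set.subset_sUnion_of_mem ht0)
    · intro x hx y hy hxy
      obtain ⟨t1, ht1, hx⟩ := hx
      obtain ⟨t2, ht2, hy⟩ := hy
      rcases hchain.total ht1 ht2 with h | h
      · exact (hc ht2).2.1 x (h hx) y hy hxy
      · exact (hc ht1).2.1 x hx y (h hy) hxy
    · intro u hu x
      constructor
      · rintro ⟨t1, ht1, hx⟩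
        exact ⟨t1, ht1, ((hc ht1).2.2 u hu x).mp hx⟩
      · rintro ⟨t1, ht1, hx⟩
        exact ⟨t1, ht1, ((hc ht1).2.2 u hu x).mpr hx⟩
  obtain ⟨A, -, hAmax⟩ := zorn_subset_nonempty 𝒮 hchain seed ⟨le_refl _, hseedsep, hseedper⟩
  obtain ⟨hseedA, hAsep, hAper⟩ := hAmax.1
  refine ⟨A, hseedA, hAsep, hAper, ?_⟩
  intro x
  by_contra hcon
  push_neg at hcon
  -- hcon : ∀ a ∈ A, δ ≤ dist x a
  have hxA : x ∉ A := fun hxA => by have := hcon x hxA; simp at this; linarith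
  set A' : Set (EuclideanSpace ℝ (Fin n)) := A ∪ {y | ∃ u ∈ latSet n M, y = x + u} with hA'
  have hsub : A ⊆ A' := Set.subset_union_left
  have hxA' : x ∈ A' := Or.inr ⟨0, latSet_zero, by simp⟩
  have hA'mem : A' ∈ 𝒮 := by
    refine ⟨hseedA.trans hsub, ?_, ?_⟩
    · intro a ha b hb hab
      rcases ha with ha | ⟨u, hu, rfl⟩
      · rcases hb with hb | ⟨u', hu', rfl⟩
        · exact hAsep a ha b hb hab
        · -- a ∈ A, b = x + u'
          have : a - u' ∈ A := latPeriodic_mem_sub hAper hu' ha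
          have h1 := hcon _ this
          calc δ ≤ dist x (a - u') := h1
            _ = dist (x + u') a := by rw [dist_sub_eq_dist_add_right, dist_comm]
            _ = dist a (x + u') := dist_comm _ _
      · rcases hb with hb | ⟨u', hu', rfl⟩
        · have : b - u ∈ A := latPeriodic_mem_sub hAper hu hb
          have h1 := hcon _ this
          calc δ ≤ dist x (b - u) := h1
            _ = dist (x + u) b := by rw [dist_sub_eq_dist_add_right, dist_comm]
        · have hnu : u ≠ u' := fun h => hab (by rw [h])
          have : u - u' ≠ 0 := sub_ne_zero_of_ne hnu
          have h1 : M ≤ ‖u - u'‖ := latSet_norm_ge hM (latSet_add hu (latSet_neg hu')) (by simpa [sub_eq_add_neg] using this)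
          calc δ ≤ M := hMδ
            _ ≤ ‖u - u'‖ := h1
            _ = dist (x + u) (x + u') := by rw [dist_eq_norm]; congr 1; abel
    · intro u hu y
      constructor
      · rintro (hy | ⟨u', hu', hy⟩)
        · exact Or.inl ((hAper u hu y).mp hy)
        · refine Or.inr ⟨u' - u, latSet_add hu' (latSet_neg hu), ?_⟩
          have : y + u = x + u' := hy
          have : y = x + u' - u := by rw [← this]; abel
          rw [this]; abel
      · rintro (hy | ⟨u', hu', hy⟩)
        · exact Or.inl ((hAper u hu y).mpr hy)
        · exact Or.inr ⟨u' + u, latSet_add hu' hu, by rw [hy]; abel⟩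
  have := hAmax.2 hA'mem hsub
  exact hxA (this hxA')


lemma infDist_periodic_invariant {A : Set (EuclideanSpace ℝ (Fin n))} (hA : LatPeriodic (M := M) A)
    (hne : A.Nonempty) {u : EuclideanSpace ℝ (Fin n)} (hu : u ∈ latSet n M)
    (x : EuclideanSpace ℝ (Fin n)) : infDist (x + u) A = infDist x A := by
  have key : ∀ (y w : EuclideanSpace ℝ (Fin n)), w ∈ latSet n M →
      infDist (y + w) A ≤ infDist y A := by
    intro y w hw
    by_contra hlt
    push_neg at hlt
    obtain ⟨a, ha, hda⟩ := (infDist_lt_iff hne).mp hlt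
    have haw : a + w ∈ A := (hA w hw a).mpr ha
    have : infDist (y + w) A ≤ dist (y + w) (a + w) := infDist_le_dist_of_mem haw
    rw [dist_add_right] at this
    linarith
  have h1 := key x u hu
  have h2 := key (x + u) (-u) (latSet_neg hu)
  simp only [add_neg_cancel_right] at h2
  linarith

/-- Periodic sets with pointwise covering `< δ` have uniform covering `< s₁ < δ`. -/
lemma periodic_uniform_cover (δ : ℝ) (hδ : 0 < δ) (hMδ : δ ≤ M)
    {A : Set (EuclideanSpace ℝ (Fin n))} (hA : LatPeriodic (M := M) A)
    (hcov : ∀ x, ∃ a ∈ A, dist x a < δ) :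
    ∃ s₁ : ℝ, 0 < s₁ ∧ s₁ < δ ∧ ∀ x, ∃ a ∈ A, dist x a < s₁ := by
  have hM : 0 < M := lt_of_lt_of_le hδ hMδ
  have hne : A.Nonempty := by obtain ⟨a, ha, -⟩ := hcov 0; exact ⟨a, ha⟩
  set h : EuclideanSpace ℝ (Fin n) → ℝ := fun x => infDist x A with hh
  have hcont : Continuous h := continuous_infDist_pt A
  set C : Set (EuclideanSpace ℝ (Fin n)) := closedBall 0 ((n + 1) * M) with hC
  have hCc : IsCompact C := isCompact_closedBall _ _
  have hCne : C.Nonempty := ⟨0, by simp [hC]; positivity⟩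
  obtain ⟨x₀, hx₀C, hx₀max⟩ := hCc.exists_isMaxOn hCne hcont.continuousOn
  set s₀ : ℝ := h x₀ with hs₀
  have hs₀δ : s₀ < δ := by
    obtain ⟨a, ha, hda⟩ := hcov x₀
    exact lt_of_le_of_lt (infDist_le_dist_of_mem ha) hda
  have hbound : ∀ x, h x ≤ s₀ := by
    intro x
    obtain ⟨u, hu, hnorm⟩ := latSet_reduce hM x
    have hxC : x + u ∈ C := by simp [hC, mem_closedBall, dist_eq_norm]; simpa using hnorm
    have hmax : h (x + u) ≤ h x₀ := hx₀max hxC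
    have heq : h (x + u) = h x := infDist_periodic_invariant hA hne hu x
    rw [heq] at hmax
    exact hmax
  have hs₀0 : 0 ≤ s₀ := infDist_nonneg
  refine ⟨(s₀ + δ) / 2, by linarith, by linarith, ?_⟩
  intro x
  have : infDist x A < (s₀ + δ) / 2 := lt_of_le_of_lt (hbound x) (by linarith)
  exact (infDist_lt_iff hne).mp this

end Lattice

section Geometry

variable {n : ℕ}

/-- If `a` is at distance `≥ f` from both `P` and `Q = P + f•e`, then it is at distance
`≥ (f - m) + m/2` from the moved point `Q - m•e`. -/
lemma second_min_lemma (f m : ℝ) (hf : 0 < f) (hm : 0 ≤ m) (hmf : m ≤ f)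
    (e P a : EuclideanSpace ℝ (Fin n)) (he : ‖e‖ = 1)
    (h1 : f ≤ dist a P) (h2 : f ≤ dist a (P + f • e)) :
    (f - m) + m / 2 ≤ dist a (P + f • e - m • e) := by
  set y : EuclideanSpace ℝ (Fin n) := a - (P + f • e) with hy
  have hyn : dist a (P + f • e) = ‖y‖ := by rw [dist_eq_norm]
  have ht : a - (P + f • e - m • e) = y + m • e := by rw [hy]; abel
  have hP : a - P = y + f • e := by rw [hy]; abel
  set t : ℝ := inner ℝ y e with htdef
  have expand : ∀ c : ℝ, ‖y + c • e‖ ^ 2 = ‖y‖ ^ 2 + 2 * c * t + c ^ 2 := by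
    intro c
    rw [norm_add_sq_real, real_inner_smul_right, norm_smul, he, mul_one, Real.norm_eq_abs,
      sq_abs]
    ring
  have hyf : f ^ 2 ≤ ‖y + f • e‖ ^ 2 := by
    rw [← hP]
    have h' : f ≤ ‖a - P‖ := by rwa [← dist_eq_norm]
    exact pow_le_pow_left₀ hf.le h' 2
  have hyy : f ≤ ‖y‖ := by rw [← hyn]; exact h2
  have h2t : -(‖y‖^2) / f ≤ 2 * t := by
    rw [expand f] at hyf
    have : 0 ≤ ‖y‖ ^ 2 + 2 * f * t := by nlinarith
    rw [div_le_iff₀ hf] at *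
    nlinarith
  have key : ((f - m) + m / 2) ^ 2 ≤ ‖y + m • e‖ ^ 2 := by
    rw [expand m]
    have h3 : ‖y‖ ^ 2 * (1 - m / f) + m ^ 2 ≤ ‖y‖ ^ 2 + 2 * m * t + m ^ 2 := by
      have hmf' : 0 ≤ m / f := by positivity
      have : -(m / f) * ‖y‖ ^ 2 ≤ 2 * m * t := by
        rcases eq_or_lt_of_le hm with rfl | hmpos
        · simp
        · have := mul_le_mul_of_nonneg_left h2t (le_of_lt hmpos)
          calc -(m / f) * ‖y‖ ^ 2 = m * (-(‖y‖^2) / f) := by ring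
            _ ≤ m * (2 * t) := by nlinarith
            _ = 2 * m * t := by ring
      nlinarith
    have h4 : f ^ 2 * (1 - m / f) + m ^ 2 ≤ ‖y‖ ^ 2 * (1 - m / f) + m ^ 2 := by
      have h5 : 0 ≤ 1 - m / f := by
        rw [sub_nonneg, div_le_one hf]; exact hmf
      have hy2 : f ^ 2 ≤ ‖y‖ ^ 2 := pow_le_pow_left₀ hf.le hyy 2
      nlinarith [mul_nonneg (sub_nonneg.mpr hy2) h5]
    have h6 : ((f - m) + m / 2) ^ 2 ≤ f ^ 2 * (1 - m / f) + m ^ 2 := by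
      have : f ^ 2 * (1 - m / f) = f ^ 2 - m * f := by field_simp
      rw [this]
      nlinarith
    linarith
  rw [dist_eq_norm, ht]
  calc (f - m) + m / 2 = Real.sqrt (((f - m) + m / 2) ^ 2) := (Real.sqrt_sq (by linarith)).symm
    _ ≤ Real.sqrt (‖y + m • e‖ ^ 2) := Real.sqrt_le_sqrt key
    _ = ‖y + m • e‖ := Real.sqrt_sq (norm_nonneg _)

end Geometry

section Lambda

variable {n : ℕ}

/-- The marker configuration: a Delone-type set with a unique close pair near `w`
(up to lattice translations at distance `≥ M`). -/
lemma exists_marker (hn : 0 < n) (δ ε : ℝ) (hδ : 0 < δ) (hεδ : δ ≤ ε) (M : ℝ)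
    (hM : 2 * δ + 2 ≤ M) (w : EuclideanSpace ℝ (Fin n)) :
    ∃ (Λ : Set (EuclideanSpace ℝ (Fin n))) (e₁ : EuclideanSpace ℝ (Fin n)) (m : ℝ),
      0 < m ∧ m ≤ δ / 2 ∧ ‖e₁‖ = 1 ∧
      (∀ x, ∃ y ∈ Λ, dist x y < δ) ∧
      IsSeparated' δ Λ ∧
      w ∈ Λ ∧ w + δ • e₁ ∈ Λ ∧
      (∀ a ∈ Λ, ∀ b ∈ Λ, a ≠ b → dist a b < δ + m / 2 →
        ∃ z : EuclideanSpace ℝ (Fin n), (z = 0 ∨ M ≤ ‖z‖) ∧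
          ((a = w + z ∧ b = w + z + δ • e₁) ∨ (b = w + z ∧ a = w + z + δ • e₁))) := by
  have hM0 : 0 < M := by linarith
  have hMδ : δ ≤ M := by linarith
  set i0 : Fin n := ⟨0, hn⟩
  set e₁ : EuclideanSpace ℝ (Fin n) := EuclideanSpace.single i0 1 with he₁def
  have he₁ : ‖e₁‖ = 1 := by rw [he₁def, EuclideanSpace.norm_single]; norm_num
  have hδe₁ : ‖δ • e₁‖ = δ := by rw [norm_smul, he₁, Real.norm_eq_abs, abs_of_pos hδ, mul_one]
  have he₁ne : e₁ ≠ 0 := by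
    intro h
    rw [h, norm_zero] at he₁
    norm_num at he₁
  have hδe₁ne : δ • e₁ ≠ 0 := smul_ne_zero (ne_of_gt hδ) he₁ne
  -- the seed: lattice plus a parallel copy at distance δ
  set Qform : Set (EuclideanSpace ℝ (Fin n)) := {x | x - δ • e₁ ∈ latSet n M} with hQform
  set seed : Set (EuclideanSpace ℝ (Fin n)) := latSet n M ∪ Qform with hseed
  have hseedper : LatPeriodic (M := M) seed := by
    intro u hu x
    constructor
    · rintro (h | h)
      · have h2 := latSet_add h (latSet_neg hu)
        rw [add_neg_cancel_right] at h2
        exact Or.inl h2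
      · refine Or.inr ?_
        have h2 := latSet_add h (latSet_neg hu)
        show x - δ • e₁ ∈ latSet n M
        have heq : x - δ • e₁ = x + u - δ • e₁ + -u := by abel
        rw [heq]
        exact h2
    · rintro (h | h)
      · exact Or.inl (latSet_add h hu)
      · refine Or.inr ?_
        have h2 := latSet_add h hu
        show x + u - δ • e₁ ∈ latSet n M
        have heq : x + u - δ • e₁ = x - δ • e₁ + u := by abel
        rw [heq]
        exact h2
  have hseedsep : IsSeparated' δ seed := by
    intro x hx y hy hxy
    have hdist : dist x y = ‖x - y‖ := dist_eq_norm x y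
    rcases hx with hx | hx
    · rcases hy with hy | hy
      · have : x - y ≠ 0 := sub_ne_zero_of_ne hxy
        have h1 : M ≤ ‖x - y‖ := latSet_norm_ge hM0 (latSet_add hx (latSet_neg hy)) (by simpa [sub_eq_add_neg] using this)
        rw [hdist]; linarith
      · -- x ∈ lat, y - δe₁ ∈ lat
        by_cases hc : x = y - δ • e₁
        · have : y - x = δ • e₁ := by rw [hc]; abel
          rw [hdist, ← norm_neg, neg_sub, this, hδe₁]
        · have h0 : x - (y - δ • e₁) ≠ 0 := sub_ne_zero_of_ne hc
          have h1 : M ≤ ‖x - (y - δ • e₁)‖ :=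
            latSet_norm_ge hM0 (latSet_add hx (latSet_neg hy)) (by simpa [sub_eq_add_neg] using h0)
          have h2 : ‖x - (y - δ • e₁)‖ ≤ ‖x - y‖ + δ := by
            have : x - (y - δ • e₁) = (x - y) + δ • e₁ := by abel
            rw [this]
            calc ‖(x - y) + δ • e₁‖ ≤ ‖x - y‖ + ‖δ • e₁‖ := norm_add_le _ _
              _ = ‖x - y‖ + δ := by rw [hδe₁]
          rw [hdist]; linarith
    · rcases hy with hy | hy
      · by_cases hc : y = x - δ • e₁
        · have : x - y = δ • e₁ := by rw [hc]; abel
          rw [hdist, this, hδe₁]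
        · have h0 : y - (x - δ • e₁) ≠ 0 := sub_ne_zero_of_ne hc
          have h1 : M ≤ ‖y - (x - δ • e₁)‖ :=
            latSet_norm_ge hM0 (latSet_add hy (latSet_neg hx)) (by simpa [sub_eq_add_neg] using h0)
          have h2 : ‖y - (x - δ • e₁)‖ ≤ ‖x - y‖ + δ := by
            have : y - (x - δ • e₁) = -(x - y) + δ • e₁ := by abel
            rw [this]
            calc ‖-(x - y) + δ • e₁‖ ≤ ‖-(x - y)‖ + ‖δ • e₁‖ := norm_add_le _ _
              _ = ‖x - y‖ + δ := by rw [norm_neg, hδe₁]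
          rw [hdist]; linarith
      · have h0 : (x - δ • e₁) - (y - δ • e₁) ≠ 0 := by
          intro h
          apply hxy
          have : x - y = (x - δ • e₁) - (y - δ • e₁) := by abel
          have h2 : x - y = 0 := by rw [this, h]
          exact sub_eq_zero.mp h2
        have h1 : M ≤ ‖(x - δ • e₁) - (y - δ • e₁)‖ :=
          latSet_norm_ge hM0 (latSet_add hx (latSet_neg hy)) (by simpa [sub_eq_add_neg] using h0)
        have heq : (x - δ • e₁) - (y - δ • e₁) = x - y := by abel
        rw [heq] at h1
        rw [hdist]; linarith
  obtain ⟨A, hseedA, hAsep, hAper, hAcov⟩ :=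
    exists_maximal_periodic (M := M) δ hδ hMδ seed hseedper hseedsep
  obtain ⟨s₁, hs₁0, hs₁δ, hs₁cov⟩ := periodic_uniform_cover (M := M) δ hδ hMδ hAper hAcov
  -- constants
  set sB : ℝ := (s₁ + 2 * δ) / 3 with hsB
  have hsB1 : s₁ < sB := by linarith
  have hsBδ : sB < δ := by linarith
  have hsB0 : 0 < sB := by linarith
  set c : ℝ := δ / sB with hc
  have hcsB : c * sB = δ := by rw [hc]; exact div_mul_cancel₀ δ (ne_of_gt hsB0)
  have hc1 : 1 < c := by nlinarith
  have hc0 : 0 < c := by linarith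
  set m : ℝ := c * δ - δ with hm
  have hm0 : 0 < m := by nlinarith
  have h23 : 2 * δ / 3 ≤ sB := by linarith
  have hc32 : c ≤ 3 / 2 := by nlinarith
  have hmm2 : m = c * δ - c * sB := by linarith
  have hmδ2 : m ≤ δ / 2 := by
    have hb : c * (δ - sB) ≤ (3 / 2) * (δ / 3) :=
      mul_le_mul hc32 (by linarith) (by linarith) (by norm_num)
    nlinarith
  set f : ℝ := c * δ with hf
  have hff : f = δ + m := by rw [hf, hm]; ring
  have hf0 : 0 < f := by rw [hf]; positivity
  have hcov2 : c * s₁ + m < δ := by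
    have h1 : s₁ + δ - 2 * sB < 0 := by linarith
    nlinarith [mul_neg_of_pos_of_neg hc0 h1]
  -- the configuration
  set Qset : Set (EuclideanSpace ℝ (Fin n)) := {x | x ∈ A ∧ x - δ • e₁ ∈ latSet n M} with hQset
  set Λ : Set (EuclideanSpace ℝ (Fin n)) :=
    (fun a => c • a + w) '' (A \ {x | x - δ • e₁ ∈ latSet n M}) ∪
    (fun a => c • a + w - m • e₁) '' (A ∩ {x | x - δ • e₁ ∈ latSet n M}) with hΛ
  have hdimg : ∀ α β : EuclideanSpace ℝ (Fin n),
      dist (c • α + w) (c • β + w) = c * dist α β := by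
    intro α β
    rw [dist_add_right, dist_smul₀, Real.norm_eq_abs, abs_of_pos hc0]
  have hlatA : ∀ v ∈ latSet n M, v ∈ A := fun v hv => hseedA (Or.inl hv)
  have hQA : ∀ v ∈ latSet n M, v + δ • e₁ ∈ A := by
    intro v hv
    apply hseedA
    refine Or.inr ?_
    show v + δ • e₁ - δ • e₁ ∈ latSet n M
    simpa using hv
  have h0A : (0 : EuclideanSpace ℝ (Fin n)) ∈ A := hlatA 0 latSet_zero
  have h0nQ : ¬((0 : EuclideanSpace ℝ (Fin n)) - δ • e₁ ∈ latSet n M) := by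
    intro h
    have h1 : (0 : EuclideanSpace ℝ (Fin n)) - δ • e₁ ≠ 0 := by
      simp only [zero_sub, ne_eq, neg_eq_zero]
      exact hδe₁ne
    have := latSet_norm_ge hM0 h h1
    rw [zero_sub, norm_neg, hδe₁] at this
    linarith
  have hwΛ : w ∈ Λ := by
    refine Or.inl ⟨0, ⟨h0A, h0nQ⟩, ?_⟩
    simp
  have hδe₁A : δ • e₁ ∈ A := by simpa using hQA 0 latSet_zero
  have hqΛ : w + δ • e₁ ∈ Λ := by
    refine Or.inr ⟨δ • e₁, ⟨hδe₁A, by simpa using latSet_zero⟩, ?_⟩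
    show c • (δ • e₁) + w - m • e₁ = w + δ • e₁
    rw [smul_smul]
    have : c * δ = δ + m := hff
    rw [this, add_smul]
    abel
  -- covering
  have hcval : ∀ x' : EuclideanSpace ℝ (Fin n), c • (c⁻¹ • (x' - w)) + w = x' := by
    intro x'
    rw [smul_inv_smul₀ (ne_of_gt hc0), sub_add_cancel]
  have hΛcov : ∀ x, ∃ y ∈ Λ, dist x y < δ := by
    intro x
    obtain ⟨a, ha, hda⟩ := hs₁cov (c⁻¹ • (x - w))
    have h1 : dist x (c • a + w) = c * dist (c⁻¹ • (x - w)) a := by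
      conv_lhs => rw [← hcval x]
      exact hdimg _ _
    have h4 : c * dist (c⁻¹ • (x - w)) a < c * s₁ := (mul_lt_mul_iff_right₀ hc0).mpr hda
    by_cases hq : a - δ • e₁ ∈ latSet n M
    · refine ⟨c • a + w - m • e₁, Or.inr ⟨a, ⟨ha, hq⟩, rfl⟩, ?_⟩
      have h2 := dist_triangle x (c • a + w) (c • a + w - m • e₁)
      have h3 : dist (c • a + w) (c • a + w - m • e₁) = m := by
        rw [dist_eq_norm]
        have h5 : c • a + w - (c • a + w - m • e₁) = m • e₁ := by abel
        rw [h5, norm_smul, he₁, Real.norm_eq_abs, abs_of_pos hm0, mul_one]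
      rw [h3] at h2
      rw [h1] at h2
      linarith
    · refine ⟨c • a + w, Or.inl ⟨a, ⟨ha, hq⟩, rfl⟩, ?_⟩
      rw [h1]
      linarith
  -- separation and classification of close pairs
  have hinj : ∀ α β : EuclideanSpace ℝ (Fin n), c • α + w = c • β + w → α = β := by
    intro α β h
    have h2 : c • α = c • β := by
      have := congrArg (fun y => y - w) h
      simpa using this
    exact smul_right_injective _ (ne_of_gt hc0) h2
  have hmixed : ∀ α, α ∈ A → ¬(α - δ • e₁ ∈ latSet n M) → ∀ q, q ∈ A → q - δ • e₁ ∈ latSet n M →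
      (δ ≤ dist (c • α + w) (c • q + w - m • e₁)) ∧
      (dist (c • α + w) (c • q + w - m • e₁) < δ + m / 2 →
        ∃ z : EuclideanSpace ℝ (Fin n), (z = 0 ∨ M ≤ ‖z‖) ∧
          (c • α + w = w + z ∧ c • q + w - m • e₁ = w + z + δ • e₁)) := by
    intro α hα hαq q hqA hq
    set v : EuclideanSpace ℝ (Fin n) := q - δ • e₁ with hv
    have hvlat : v ∈ latSet n M := hq
    have hvA : v ∈ A := hlatA v hvlat
    have hqv : q = v + δ • e₁ := by rw [hv]; abel
    have hkey : c • q + w - m • e₁ = c • v + w + δ • e₁ := by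
      rw [hqv, smul_add, smul_smul]
      have h5 : c * δ = δ + m := by rw [← hf]; exact hff
      rw [h5, add_smul]
      abel
    by_cases hαv : α = v
    · rw [hαv]
      have hdeq : dist (c • v + w) (c • q + w - m • e₁) = δ := by
        rw [hkey, dist_eq_norm]
        have h5 : c • v + w - (c • v + w + δ • e₁) = -(δ • e₁) := by abel
        rw [h5, norm_neg, hδe₁]
      constructor
      · rw [hdeq]
      · intro _
        refine ⟨c • v, ?_, by constructor
                              · abel
                              · rw [hkey]; abel⟩
        by_cases h0 : v = 0
        · left; rw [h0, smul_zero]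
        · right
          have h6 : M ≤ ‖v‖ := latSet_norm_ge hM0 hvlat h0
          rw [norm_smul, Real.norm_eq_abs, abs_of_pos hc0]
          nlinarith
    · -- not the special pair: use the geometric lemma
      have hsep1 : f ≤ dist (c • α + w) (c • v + w) := by
        rw [hdimg]
        have h5 := hAsep α hα v hvA hαv
        calc f = c * δ := hf
          _ ≤ c * dist α v := by apply mul_le_mul_of_nonneg_left h5 hc0.le
      have hαqne : α ≠ q := by
        intro h
        apply hαq
        rw [h]
        exact hq
      have hsep2 : f ≤ dist (c • α + w) ((c • v + w) + f • e₁) := by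
        have h6 : (c • v + w) + f • e₁ = c • q + w := by
          rw [hqv, smul_add, smul_smul, ← hf]
          abel
        rw [h6, hdimg]
        have h5 := hAsep α hα q hqA hαqne
        calc f = c * δ := hf
          _ ≤ c * dist α q := by apply mul_le_mul_of_nonneg_left h5 hc0.le
      have hgeo := second_min_lemma f m hf0 hm0.le (by linarith) e₁ (c • v + w) (c • α + w)
        he₁ hsep1 hsep2
      have h7 : (c • v + w) + f • e₁ - m • e₁ = c • q + w - m • e₁ := by
        rw [hqv, smul_add, smul_smul, ← hf]
        abel
      rw [h7] at hgeo
      have h8 : f - m + m / 2 = δ + m / 2 := by rw [hff]; ring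
      rw [h8] at hgeo
      exact ⟨by linarith, fun h => absurd h (by linarith)⟩
  have hmain : ∀ a ∈ Λ, ∀ b ∈ Λ, a ≠ b → δ ≤ dist a b ∧ (dist a b < δ + m / 2 →
      ∃ z : EuclideanSpace ℝ (Fin n), (z = 0 ∨ M ≤ ‖z‖) ∧
        ((a = w + z ∧ b = w + z + δ • e₁) ∨ (b = w + z ∧ a = w + z + δ • e₁))) := by
    rintro a (⟨α, ⟨hαA, hαq⟩, rfl⟩ | ⟨α, ⟨hαA, hαq⟩, rfl⟩) b
      (⟨β, ⟨hβA, hβq⟩, rfl⟩ | ⟨β, ⟨hβA, hβq⟩, rfl⟩) hab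
    · -- both unmoved
      have hαβ : α ≠ β := fun h => hab (by rw [h])
      have h5 : f ≤ dist (c • α + w) (c • β + w) := by
        rw [hdimg]
        calc f = c * δ := hf
          _ ≤ c * dist α β := by
              apply mul_le_mul_of_nonneg_left (hAsep α hαA β hβA hαβ) hc0.le
      exact ⟨by linarith, fun h => absurd h (by linarith)⟩
    · -- a unmoved, b moved
      have := hmixed α hαA hαq β hβA hβq
      exact ⟨this.1, fun h => by
        obtain ⟨z, hz, hz2⟩ := this.2 h
        exact ⟨z, hz, Or.inl hz2⟩⟩
    · -- a moved, b unmoved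
      have := hmixed β hβA hβq α hαA hαq
      rw [dist_comm] at this
      exact ⟨this.1, fun h => by
        obtain ⟨z, hz, hz2⟩ := this.2 h
        exact ⟨z, hz, Or.inr hz2⟩⟩
    · -- both moved
      have hαβ : α ≠ β := by
        intro h
        exact hab (by rw [h])
      have h5 : dist (c • α + w - m • e₁) (c • β + w - m • e₁) = c * dist α β := by
        rw [dist_sub_right]
        exact hdimg _ _
      have h6 : M ≤ dist α β := by
        have h7 : (α - δ • e₁) - (β - δ • e₁) ≠ 0 := by
          intro h
          apply hαβ
          have h8 : α - β = (α - δ • e₁) - (β - δ • e₁) := by abel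
          have h9 : α - β = 0 := by rw [h8, h]
          exact sub_eq_zero.mp h9
        have hel : (α - δ • e₁) + -(β - δ • e₁) = α - β := by abel
        have h10 := latSet_norm_ge hM0 (latSet_add hαq (latSet_neg hβq))
          (by rw [hel]; exact sub_ne_zero_of_ne hαβ)
        rw [hel] at h10
        rwa [dist_eq_norm]
      have h12 : M ≤ dist (c • α + w - m • e₁) (c • β + w - m • e₁) := by
        rw [h5]
        calc M = 1 * M := (one_mul M).symm
          _ ≤ c * dist α β := by
              apply mul_le_mul (le_of_lt hc1) h6 hM0.le hc0.le
      exact ⟨by linarith, fun h => absurd h (by nlinarith)⟩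
  exact ⟨Λ, e₁, m, hm0, hmδ2, he₁, hΛcov, fun a ha b hb hab => (hmain a ha b hb hab).1,
    hwΛ, hqΛ, fun a ha b hb hab h => (hmain a ha b hb hab).2 h⟩

end Lambda

section Fk

variable {n : ℕ}

/-- The `k`-th open dense set: Delone sets having, for each translation `v` in the `k`-annulus,
a definite mismatch witness within a bounded window. -/
def Fk (n : ℕ) (ε δ : ℝ) (k : ℕ) : Set (Set (EuclideanSpace ℝ (Fin n))) :=
  {S | S ∈ Del n ε δ ∧ ∃ η R : ℝ, 0 < η ∧ η ≤ 1 ∧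
    ∀ v : EuclideanSpace ℝ (Fin n), 1 / ((k : ℝ) + 1) ≤ ‖v‖ → ‖v‖ ≤ (k : ℝ) + 1 →
      ∃ x ∈ tr v S, ‖x‖ + η < R ∧ ∀ y ∈ S, η ≤ dist x y}

lemma Fk_subset (ε δ : ℝ) (k : ℕ) : Fk n ε δ k ⊆ Del n ε δ := fun _ h => h.1

lemma Fk_open (ε δ : ℝ) (k : ℕ) : IsOpenInDel n ε δ (Fk n ε δ k) := by
  rintro S ⟨hSDel, η, R, hη0, hη1, hF⟩
  have hk0 : (0:ℝ) ≤ (k : ℝ) := Nat.cast_nonneg k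
  set r : ℝ := max (R + (k : ℝ) + 4) (8 / η) with hr
  have hr8 : 8 / η ≤ r := le_max_right _ _
  have hr0 : 0 < r := lt_of_lt_of_le (by positivity) hr8
  have h1r : 1 / r ≤ η / 8 := by
    rw [div_le_div_iff₀ hr0 (by norm_num : (0:ℝ) < 8)]
    have h2 : 8 ≤ r * η := by
      have h3 := (div_le_iff₀ hη0).mp hr8
      linarith
    nlinarith
  have hrR : R + (k : ℝ) + 4 ≤ r := le_max_left _ _
  refine ⟨r, hr0, ?_⟩
  intro S' hS'Del hNrel
  refine ⟨hS'Del, η / 2, R + 1, by positivity, by linarith, ?_⟩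
  intro v hv1 hv2
  obtain ⟨x, hxtr, hxR, hxsep⟩ := hF v hv1 hv2
  obtain ⟨s, hs, rfl⟩ := hxtr
  have hxnorm : ‖s - v‖ + η < R := hxR
  have hsnorm : ‖s‖ < r := by
    calc ‖s‖ = ‖(s - v) + v‖ := by rw [sub_add_cancel]
      _ ≤ ‖s - v‖ + ‖v‖ := norm_add_le _ _
      _ < (R - η) + ((k : ℝ) + 1) := by linarith
      _ ≤ r := by linarith
  have hsball : s ∈ S ∩ ball (0 : EuclideanSpace ℝ (Fin n)) r := by
    refine ⟨hs, ?_⟩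
    rw [mem_ball, dist_zero_right]
    exact hsnorm
  obtain ⟨s', hs', b, hb, hsum⟩ := Set.mem_add.mp (hNrel.1 hsball)
  have hbn : ‖b‖ < 1 / r := by rwa [mem_ball, dist_zero_right] at hb
  have hss' : dist s s' < η / 8 := by
    have : s - s' = b := by rw [← hsum]; abel
    rw [dist_eq_norm, this]
    linarith
  refine ⟨s' - v, ⟨s', hs', rfl⟩, ?_, ?_⟩
  · have : ‖s' - v‖ ≤ ‖s - v‖ + dist s s' := by
      calc ‖s' - v‖ = ‖(s - v) - (s - s')‖ := by congr 1; abel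
        _ ≤ ‖s - v‖ + ‖s - s'‖ := norm_sub_le _ _
        _ = ‖s - v‖ + dist s s' := by rw [dist_eq_norm]
    linarith
  · intro y' hy'
    by_contra hlt
    push_neg at hlt
    have hy'norm : ‖y'‖ < r := by
      have h2 : ‖y'‖ ≤ ‖s' - v‖ + dist (s' - v) y' := by
        calc ‖y'‖ = ‖(s' - v) + (y' - (s' - v))‖ := by congr 1; abel
          _ ≤ ‖s' - v‖ + ‖y' - (s' - v)‖ := norm_add_le _ _
          _ = ‖s' - v‖ + dist (s' - v) y' := by
              rw [show ‖y' - (s' - v)‖ = dist (s' - v) y' from by rw [dist_comm, dist_eq_norm]]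
      have h3 : ‖s' - v‖ ≤ ‖s - v‖ + dist s s' := by
        calc ‖s' - v‖ = ‖(s - v) - (s - s')‖ := by congr 1; abel
          _ ≤ ‖s - v‖ + ‖s - s'‖ := norm_sub_le _ _
          _ = ‖s - v‖ + dist s s' := by rw [dist_eq_norm]
      linarith
    have hy'ball : y' ∈ S' ∩ ball (0 : EuclideanSpace ℝ (Fin n)) r := by
      refine ⟨hy', ?_⟩
      rw [mem_ball, dist_zero_right]
      exact hy'norm
    obtain ⟨y, hy, b', hb', hsum'⟩ := Set.mem_add.mp (hNrel.2 hy'ball)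
    have hb'n : ‖b'‖ < 1 / r := by rwa [mem_ball, dist_zero_right] at hb'
    have hyy' : dist y' y < η / 8 := by
      have : y' - y = b' := by rw [← hsum']; abel
      rw [dist_eq_norm, this]
      linarith
    have : dist (s - v) y < η := by
      calc dist (s - v) y ≤ dist (s - v) (s' - v) + dist (s' - v) y' + dist y' y :=
            dist_triangle4 _ _ _ _
        _ = dist s s' + dist (s' - v) y' + dist y' y := by rw [dist_sub_right]
        _ < η / 8 + η / 2 + η / 8 := by linarith
        _ ≤ η := by linarith
    exact absurd this (not_lt.mpr (hxsep y hy))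

end Fk

section Dense

variable {n : ℕ}

lemma Fk_dense (hn : 0 < n) (ε δ : ℝ) (hδ : 0 < δ) (hεδ : δ ≤ ε) (k : ℕ) :
    IsDenseInDel n ε δ (Fk n ε δ k) := by
  intro S hSDel r hr
  obtain ⟨hScov, hSsep⟩ := hSDel
  have hk0 : (0:ℝ) ≤ (k : ℝ) := Nat.cast_nonneg k
  set K : ℝ := (k : ℝ) + 3 + δ with hK
  have hK0 : 0 < K := by linarith
  set K' : ℝ := K + δ + 1 with hK'
  set M : ℝ := 2 * K + 2 * δ + 2 with hM
  set R₁ : ℝ := r + ε + 1 with hR₁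
  set R₂ : ℝ := R₁ + δ + 1 with hR₂
  set c₀ : ℝ := R₂ + K' + δ + ε + 5 with hc₀
  have hc₀0 : 0 < c₀ := by linarith
  set u0 : EuclideanSpace ℝ (Fin n) := EuclideanSpace.single (⟨0, hn⟩ : Fin n) (1:ℝ) with hu0
  have hu0n : ‖u0‖ = 1 := by rw [hu0, EuclideanSpace.norm_single]; norm_num
  set w : EuclideanSpace ℝ (Fin n) := c₀ • u0 with hw
  have hwn : ‖w‖ = c₀ := by
    rw [hw, norm_smul, hu0n, Real.norm_eq_abs, abs_of_pos hc₀0, mul_one]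
  obtain ⟨Λ, e₁, m, hm0, hmδ2, he₁, hΛcov, hΛsep, hwΛ, hqΛ, hΛclass⟩ :=
    exists_marker hn δ ε hδ hεδ M (by linarith) w
  set q : EuclideanSpace ℝ (Fin n) := w + δ • e₁ with hq
  have hδe₁n : ‖δ • e₁‖ = δ := by
    rw [norm_smul, he₁, Real.norm_eq_abs, abs_of_pos hδ, mul_one]
  have hqn_up : ‖q‖ ≤ c₀ + δ := by
    calc ‖q‖ ≤ ‖w‖ + ‖δ • e₁‖ := norm_add_le _ _
      _ = c₀ + δ := by rw [hwn, hδe₁n]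
  have hqn_low : R₂ ≤ ‖q‖ := by
    have h1 : ‖w‖ ≤ ‖w + δ • e₁‖ + ‖δ • e₁‖ := by
      calc ‖w‖ = ‖(w + δ • e₁) - δ • e₁‖ := by congr 1; abel
        _ ≤ ‖w + δ • e₁‖ + ‖δ • e₁‖ := norm_sub_le _ _
    rw [hwn, hδe₁n] at h1
    have h2 : c₀ - δ ≤ ‖q‖ := by rw [hq]; linarith
    linarith
  set base : Set (EuclideanSpace ℝ (Fin n)) :=
    (S ∩ closedBall 0 R₁) ∪ (Λ ∩ {x | R₂ ≤ ‖x‖}) with hbase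
  have hbsep : IsSeparated' δ base := by
    rintro x (⟨hxS, hxcb⟩ | ⟨hxΛ, hxfar⟩) y (⟨hyS, hycb⟩ | ⟨hyΛ, hyfar⟩) hxy
    · exact hSsep x hxS y hyS hxy
    · have h1 : ‖x‖ ≤ R₁ := by rwa [Metric.mem_closedBall, dist_zero_right] at hxcb
      have h2 : R₂ ≤ ‖y‖ := hyfar
      calc δ ≤ ‖y‖ - ‖x‖ := by linarith
        _ ≤ ‖y - x‖ := norm_sub_norm_le _ _
        _ = dist x y := by rw [dist_comm, dist_eq_norm]
    · have h1 : ‖y‖ ≤ R₁ := by rwa [Metric.mem_closedBall, dist_zero_right] at hycb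
      have h2 : R₂ ≤ ‖x‖ := hxfar
      calc δ ≤ ‖x‖ - ‖y‖ := by linarith
        _ ≤ ‖x - y‖ := norm_sub_norm_le _ _
        _ = dist x y := by rw [dist_eq_norm]
    · exact hΛsep x hxΛ y hyΛ hxy
  set Ω : Set (EuclideanSpace ℝ (Fin n)) := {x | r + 1 ≤ ‖x‖ ∧ K' ≤ dist x w} with hΩ
  obtain ⟨T, hTΩ, hTsep, hTmax⟩ := exists_maximal_sep δ hδ base Ω hbsep
  set S' : Set (EuclideanSpace ℝ (Fin n)) := base ∪ T with hS'def
  -- S' is Delone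
  have hS'cov : ∀ x, ∃ y ∈ S', dist x y ≤ ε := by
    intro x
    by_cases h1 : ‖x‖ < r + 1
    · obtain ⟨y, hy, hxy⟩ := hScov x
      refine ⟨y, Or.inl (Or.inl ⟨hy, ?_⟩), hxy⟩
      rw [Metric.mem_closedBall, dist_zero_right]
      have h2 : ‖y‖ ≤ ‖x‖ + ‖x - y‖ := by
        calc ‖y‖ = ‖x - (x - y)‖ := by congr 1; abel
          _ ≤ ‖x‖ + ‖x - y‖ := norm_sub_le _ _
      rw [← dist_eq_norm] at h2
      linarith
    · by_cases h2 : dist x w < K'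
      · obtain ⟨y, hy, hxy⟩ := hΛcov x
        refine ⟨y, Or.inl (Or.inr ⟨hy, ?_⟩), le_trans hxy.le hεδ⟩
        show R₂ ≤ ‖y‖
        have h3 : dist y w ≤ dist y x + dist x w := dist_triangle _ _ _
        have h4 : ‖w‖ - ‖y - w‖ ≤ ‖y‖ := by
          have := norm_sub_norm_le w (w - y)
          calc ‖w‖ - ‖y - w‖ = ‖w‖ - ‖w - y‖ := by rw [norm_sub_rev]
            _ ≤ ‖w - (w - y)‖ := norm_sub_norm_le _ _
            _ = ‖y‖ := by congr 1; abel
        rw [← dist_eq_norm] at h4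
        have h5 : dist y x = dist x y := dist_comm _ _
        rw [hwn] at h4
        have h6 : dist y w < δ + K' := by
          rw [dist_comm] at hxy
          linarith
        linarith
      · obtain ⟨y, hy, hxy⟩ := hTmax x ⟨le_of_not_gt h1, le_of_not_gt h2⟩
        exact ⟨y, hy, le_trans hxy.le hεδ⟩
  have hS'Del : S' ∈ Del n ε δ := ⟨hS'cov, hTsep⟩
  -- Nrel
  have hNrel : Nrel n r S S' := by
    constructor
    · rintro x ⟨hxS, hxb⟩
      have hxr : ‖x‖ < r := by rwa [mem_ball, dist_zero_right] at hxb
      refine Set.mem_add.mpr ⟨x, Or.inl (Or.inl ⟨hxS, ?_⟩), 0,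
        mem_ball_self (by positivity), add_zero x⟩
      rw [Metric.mem_closedBall, dist_zero_right]
      linarith
    · rintro y ⟨hyS', hyb⟩
      have hyr : ‖y‖ < r := by rwa [mem_ball, dist_zero_right] at hyb
      rcases hyS' with (⟨hyS, _⟩ | ⟨_, hyfar⟩) | hyT
      · exact Set.mem_add.mpr ⟨y, hyS, 0, mem_ball_self (by positivity), add_zero y⟩
      · exfalso
        have h2 : R₂ ≤ ‖y‖ := hyfar
        linarith
      · exfalso
        have h2 : r + 1 ≤ ‖y‖ := (hTΩ hyT).1
        linarith
  -- the mismatch property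
  set η : ℝ := min (min (m / 10) (1 / ((k:ℝ) + 2))) (min (δ / 4) 1) with hη
  have hη0 : 0 < η := by
    apply lt_min (lt_min (by linarith) (by positivity)) (lt_min (by linarith) one_pos)
  have hη1 : η ≤ 1 := le_trans (min_le_right _ _) (min_le_right _ _)
  have hηm : η ≤ m / 10 := le_trans (min_le_left _ _) (min_le_left _ _)
  have hηk : η ≤ 1 / ((k:ℝ) + 2) := le_trans (min_le_left _ _) (min_le_right _ _)
  have hηδ : η ≤ δ / 4 := le_trans (min_le_right _ _) (min_le_left _ _)
  set Rw : ℝ := c₀ + δ + (k : ℝ) + 3 with hRw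
  have hwS' : w ∈ S' := Or.inl (Or.inr ⟨hwΛ, show R₂ ≤ ‖w‖ by rw [hwn]; linarith⟩)
  have hqS' : q ∈ S' := Or.inl (Or.inr ⟨hqΛ, hqn_low⟩)
  refine ⟨S', ⟨hS'Del, η, Rw, hη0, hη1, ?_⟩, hNrel⟩
  intro v hv1 hv2
  have hdwv : dist (w - v) w = ‖v‖ := by
    rw [dist_eq_norm]
    have : w - v - w = -v := by abel
    rw [this, norm_neg]
  by_cases hc1 : ∀ y ∈ S', η ≤ dist (w - v) y
  · refine ⟨w - v, ⟨w, hwS', rfl⟩, ?_, hc1⟩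
    have h1 : ‖w - v‖ ≤ ‖w‖ + ‖v‖ := norm_sub_le _ _
    rw [hwn] at h1
    calc ‖w - v‖ + η ≤ (c₀ + ((k:ℝ) + 1)) + 1 := by linarith
      _ < Rw := by rw [hRw]; linarith
  · by_cases hc2 : ∀ y ∈ S', η ≤ dist (q - v) y
    · refine ⟨q - v, ⟨q, hqS', rfl⟩, ?_, hc2⟩
      have h1 : ‖q - v‖ ≤ ‖q‖ + ‖v‖ := norm_sub_le _ _
      calc ‖q - v‖ + η ≤ ((c₀ + δ) + ((k:ℝ) + 1)) + 1 := by linarith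
        _ < Rw := by rw [hRw]; linarith
    · exfalso
      push_neg at hc1 hc2
      obtain ⟨a, haS', hda⟩ := hc1
      obtain ⟨b, hbS', hdb⟩ := hc2
      have hdwq : dist (w - v) (q - v) = δ := by
        rw [dist_eq_norm]
        have h1 : w - v - (q - v) = -(δ • e₁) := by rw [hq]; abel
        rw [h1, norm_neg, hδe₁n]
      have hdaw : dist a w < K := by
        calc dist a w ≤ dist a (w - v) + dist (w - v) w := dist_triangle _ _ _
          _ = dist (w - v) a + ‖v‖ := by rw [dist_comm a, hdwv]
          _ < η + ((k:ℝ) + 1) := by linarith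
          _ ≤ 1 + ((k:ℝ) + 1) := by linarith
          _ < K := by rw [hK]; linarith
      have hdbw : dist b w < K := by
        have h1 : dist (q - v) w ≤ ‖δ • e₁‖ + ‖v‖ := by
          rw [dist_eq_norm]
          have h2 : q - v - w = δ • e₁ - v := by rw [hq]; abel
          rw [h2]
          exact norm_sub_le _ _
        calc dist b w ≤ dist b (q - v) + dist (q - v) w := dist_triangle _ _ _
          _ = dist (q - v) b + dist (q - v) w := by rw [dist_comm b]
          _ < η + (δ + ((k:ℝ) + 1)) := by rw [hδe₁n] at h1; linarith
          _ ≤ 1 + (δ + ((k:ℝ) + 1)) := by linarith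
          _ < K := by rw [hK]; linarith
      have hfar : ∀ x : EuclideanSpace ℝ (Fin n), x ∈ S' → dist x w < K → x ∈ Λ := by
        rintro x ((⟨hxS, hxcb⟩ | ⟨hxΛ, _⟩) | hxT) hdx
        · exfalso
          have h1 : ‖x‖ ≤ R₁ := by rwa [Metric.mem_closedBall, dist_zero_right] at hxcb
          have h2 : ‖w‖ - ‖x‖ ≤ ‖x - w‖ := by
            calc ‖w‖ - ‖x‖ = ‖w‖ - ‖x‖ := rfl
              _ ≤ ‖w - x‖ := norm_sub_norm_le _ _
              _ = ‖x - w‖ := by rw [norm_sub_rev]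
          rw [← dist_eq_norm] at h2
          rw [hwn] at h2
          have : c₀ - R₁ ≤ dist x w := by linarith
          have hcK : K < c₀ - R₁ := by rw [hc₀, hK', hR₂]; linarith
          linarith
        · exact hxΛ
        · exfalso
          have h2 : K' ≤ dist x w := (hTΩ hxT).2
          rw [hK'] at h2
          linarith
      have haΛ : a ∈ Λ := hfar a haS' hdaw
      have hbΛ : b ∈ Λ := hfar b hbS' hdbw
      have hab : a ≠ b := by
        intro h
        have h1 : dist (w - v) (q - v) ≤ dist (w - v) a + dist (q - v) b := by
          calc dist (w - v) (q - v) ≤ dist (w - v) a + dist a (q - v) := dist_triangle _ _ _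
            _ = dist (w - v) a + dist (q - v) b := by rw [h, dist_comm b]
        rw [hdwq] at h1
        linarith
      have hdab : dist a b < δ + m / 2 := by
        calc dist a b ≤ dist a (w - v) + dist (w - v) (q - v) + dist (q - v) b :=
              dist_triangle4 _ _ _ _
          _ = dist (w - v) a + δ + dist (q - v) b := by rw [dist_comm a, hdwq]
          _ < η + δ + η := by linarith
          _ ≤ δ + m / 5 := by linarith
          _ < δ + m / 2 := by linarith
      obtain ⟨z, hz, hcase⟩ := hΛclass a haΛ b hbΛ hab hdab
      have hzn : ‖z‖ < K := by
        rcases hcase with ⟨ha2, _⟩ | ⟨hb2, _⟩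
        · have : dist a w = ‖z‖ := by
            rw [ha2, dist_eq_norm]
            congr 1
            abel
          linarith
        · have : dist b w = ‖z‖ := by
            rw [hb2, dist_eq_norm]
            congr 1
            abel
          linarith
      have hz0 : z = 0 := by
        rcases hz with hz0 | hzM
        · exact hz0
        · exfalso
          have : M < K := by linarith
          rw [hM] at this
          linarith
      rw [hz0] at hcase
      have hvlow : 1 / ((k:ℝ) + 2) < ‖v‖ := by
        have h1 : 1 / ((k:ℝ) + 2) < 1 / ((k:ℝ) + 1) :=
          one_div_lt_one_div_of_lt (by linarith) (by linarith)
        linarith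
      rcases hcase with ⟨ha2, hb2⟩ | ⟨hb2, ha2⟩
      · -- a = w, b = q
        have ha3 : a = w := by rw [ha2]; abel
        rw [ha3, hdwv] at hda
        linarith
      · -- b = w, a = q
        have hb3 : b = w := by rw [hb2]; abel
        have ha3 : a = q := by rw [ha2, hq]; abel
        rw [hb3] at hdb
        rw [ha3] at hda
        -- dist (w - v) q < η and dist (q - v) w < η
        have h1 : ‖v + v‖ < 2 * η := by
          have h2 : v + v = -((w - v - q) + (q - v - w)) := by abel
          calc ‖v + v‖ = ‖(w - v - q) + (q - v - w)‖ := by rw [h2, norm_neg]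
            _ ≤ ‖w - v - q‖ + ‖q - v - w‖ := norm_add_le _ _
            _ = dist (w - v) q + dist (q - v) w := by rw [dist_eq_norm, dist_eq_norm]
            _ < 2 * η := by linarith
        have h3 : ‖v + v‖ = 2 * ‖v‖ := by
          rw [← two_smul ℝ v, norm_smul]
          norm_num
        rw [h3] at h1
        linarith

end Dense

end AperiodicAux

/-- Aperiodicity is generic in `Del_{ε,δ}` for `ε ≥ δ > 0`: the aperiodic Delone sets contain
a countable intersection of open dense subsets. -/
theorem aperiodic_generic (n : ℕ) (ε δ : ℝ) (hδ : 0 < δ) (hεδ : δ ≤ ε) :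
    ∃ F : ℕ → Set (Set (EuclideanSpace ℝ (Fin n))),
      (∀ k, F k ⊆ Del n ε δ ∧ IsOpenInDel n ε δ (F k) ∧ IsDenseInDel n ε δ (F k)) ∧
      ∀ S, (∀ k, S ∈ F k) → S ∈ Del n ε δ ∧ IsAperiodicSet S := by
  rcases Nat.eq_zero_or_pos n with rfl | hn
  · -- dimension 0 : the single-point space, every set is aperiodic
    refine ⟨fun _ => Del 0 ε δ, fun k => ⟨subset_rfl, ?_, ?_⟩, ?_⟩
    · exact fun S hS => ⟨1, one_pos, fun S' hS' _ => hS'⟩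
    · intro S hS r hr
      refine ⟨S, hS, ?_, ?_⟩ <;>
        · rintro x ⟨hx1, _⟩
          exact Set.mem_add.mpr ⟨x, hx1, 0, mem_ball_self (by positivity), add_zero x⟩
    · intro S hS
      refine ⟨hS 0, ?_⟩
      intro v hv
      exact absurd (PiLp.ext fun i => i.elim0 : v = 0) hv
  · refine ⟨fun k => AperiodicAux.Fk n ε δ k,
      fun k => ⟨AperiodicAux.Fk_subset ε δ k, AperiodicAux.Fk_open ε δ k,
        AperiodicAux.Fk_dense hn ε δ hδ hεδ k⟩, ?_⟩
    intro S hS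
    refine ⟨(hS 0).1, ?_⟩
    intro v hv heq
    have hv0 : 0 < ‖v‖ := norm_pos_iff.mpr hv
    obtain ⟨k1, hk1⟩ := exists_nat_ge (1 / ‖v‖)
    obtain ⟨k2, hk2⟩ := exists_nat_ge ‖v‖
    set k := max k1 k2 with hk
    have hk1' : (k1 : ℝ) ≤ (k : ℝ) := by exact_mod_cast Nat.cast_le.mpr (le_max_left k1 k2)
    have hk2' : (k2 : ℝ) ≤ (k : ℝ) := by exact_mod_cast Nat.cast_le.mpr (le_max_right k1 k2)
    have h1 : 1 / ((k : ℝ) + 1) ≤ ‖v‖ := by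
      have h2 : 1 / ‖v‖ ≤ (k : ℝ) + 1 := by linarith
      have h3 : 1 / ((k : ℝ) + 1) ≤ 1 / (1 / ‖v‖) := by
        apply one_div_le_one_div_of_le (by positivity) h2
      rwa [one_div_one_div] at h3
    have h2 : ‖v‖ ≤ (k : ℝ) + 1 := by linarith
    obtain ⟨_, η, R, hη0, _, hmain⟩ := hS k
    obtain ⟨x, hxtr, _, hxsep⟩ := hmain v h1 h2
    rw [heq] at hxtr
    have := hxsep x hxtr
    simp at this
    linarith
end

section
/- Let ε ≥ δ > 0. Chaotic Delone sets (aperiodic and almost chaotic) form a residual subset of Del_{ε,δ}; i.e., being chaotic is topologically generic. -/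
open Metric Pointwise

namespace ChaoticAux

variable {n : ℕ}

abbrev E (n : ℕ) : Type := EuclideanSpace ℝ (Fin n)

lemma mem_add_ball {A : Set (E n)} {t : ℝ} {x : E n} :
    x ∈ A + ball (0 : E n) t ↔ ∃ a ∈ A, dist x a < t := by
  rw [Set.mem_add]
  constructor
  · rintro ⟨a, ha, b, hb, rfl⟩
    refine ⟨a, ha, ?_⟩
    have : ‖b‖ < t := by simpa using mem_ball_zero_iff.1 hb
    simpa [dist_eq_norm] using this
  · rintro ⟨a, ha, h⟩
    refine ⟨a, ha, x - a, mem_ball_zero_iff.2 (by simpa [dist_eq_norm, dist_comm] using h), by abel⟩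

/-- One-sided rubber relation. -/
def NrelL (n : ℕ) (r : ℝ) (S S' : Set (E n)) : Prop :=
  S ∩ ball (0 : E n) r ⊆ S' + ball (0 : E n) (1 / r)

lemma nrel_iff {r : ℝ} {S S' : Set (E n)} :
    Nrel n r S S' ↔ NrelL n r S S' ∧ NrelL n r S' S := Iff.rfl

lemma nrelL_def {r : ℝ} {S S' : Set (E n)} :
    NrelL n r S S' ↔ ∀ x ∈ S, ‖x‖ < r → ∃ y ∈ S', dist x y < 1 / r := by
  constructor
  · intro h x hx hxr
    exact mem_add_ball.1 (h ⟨hx, mem_ball_zero_iff.2 hxr⟩)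
  · intro h x hx
    exact mem_add_ball.2 (h x hx.1 (mem_ball_zero_iff.1 hx.2))

lemma nrel_symm {r : ℝ} {S S' : Set (E n)} (h : Nrel n r S S') : Nrel n r S' S :=
  ⟨h.2, h.1⟩

lemma nrelL_mono {a b : ℝ} {S S' : Set (E n)} (ha : 0 < a) (hab : a ≤ b)
    (h : NrelL n b S S') : NrelL n a S S' := by
  rw [nrelL_def] at h ⊢
  intro x hx hxa
  obtain ⟨y, hy, hd⟩ := h x hx (lt_of_lt_of_le hxa hab)
  exact ⟨y, hy, lt_of_lt_of_le hd (by
    apply one_div_le_one_div_of_le ha hab)⟩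

lemma nrel_mono {a b : ℝ} {S S' : Set (E n)} (ha : 0 < a) (hab : a ≤ b)
    (h : Nrel n b S S') : Nrel n a S S' :=
  ⟨nrelL_mono ha hab h.1, nrelL_mono ha hab h.2⟩

lemma nrel_refl {r : ℝ} (hr : 0 < r) (S : Set (E n)) : Nrel n r S S := by
  have : NrelL n r S S := by
    rw [nrelL_def]
    intro x hx _
    exact ⟨x, hx, by simpa using one_div_pos.2 hr⟩
  exact ⟨this, this⟩

/-- If two sets agree on a ball of radius `r`, they are `Nrel r`-related. -/
lemma nrel_of_eq_on_ball {r : ℝ} (hr : 0 < r) {S S' : Set (E n)}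
    (h : S ∩ ball (0 : E n) r = S' ∩ ball (0 : E n) r) : Nrel n r S S' := by
  constructor
  · intro x hx
    have hx' : x ∈ S' ∩ ball (0 : E n) r := h ▸ hx
    exact mem_add_ball.2 ⟨x, hx'.1, by simpa using one_div_pos.2 hr⟩
  · intro x hx
    have hx' : x ∈ S ∩ ball (0 : E n) r := h.symm ▸ hx
    exact mem_add_ball.2 ⟨x, hx'.1, by simpa using one_div_pos.2 hr⟩

lemma nrelL_comp {t a b : ℝ} {X Y Z : Set (E n)} (ht : 0 < t)
    (ha : 2 * t + 1 ≤ a) (hb : 2 * t + 1 ≤ b)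
    (h1 : NrelL n a X Y) (h2 : NrelL n b Y Z) : NrelL n t X Z := by
  rw [nrelL_def] at h1 h2 ⊢
  have ha0 : (0:ℝ) < a := lt_of_lt_of_le (by linarith) ha
  have hb0 : (0:ℝ) < b := lt_of_lt_of_le (by linarith) hb
  have ha1 : (1:ℝ) ≤ a := by linarith
  have hb1 : (1:ℝ) ≤ b := by linarith
  intro x hx hxt
  obtain ⟨y, hy, hd1⟩ := h1 x hx (by
    have : 1/a ≤ 1 := by rw [div_le_one ha0]; exact ha1
    linarith)
  have hya : dist x y < 1 / a := hd1
  have h1a : 1/a ≤ 1 := by rw [div_le_one ha0]; exact ha1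
  have hynorm : ‖y‖ < b := by
    have hh1 : ‖y‖ ≤ ‖x‖ + ‖y - x‖ := norm_le_norm_add_norm_sub' y x
    have hh2 : ‖y - x‖ = dist x y := by rw [dist_eq_norm, norm_sub_rev]
    calc ‖y‖ ≤ ‖x‖ + dist x y := by linarith
    _ < t + 1 := by linarith
    _ ≤ b := by linarith
  obtain ⟨z, hz, hd2⟩ := h2 y hy hynorm
  refine ⟨z, hz, ?_⟩
  have h1t : 1/a + 1/b ≤ 1/t := by
    have hA : 1/a ≤ 1/(2*t+1) := one_div_le_one_div_of_le (by linarith) ha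
    have hB : 1/b ≤ 1/(2*t+1) := one_div_le_one_div_of_le (by linarith) hb
    have : 1/(2*t+1) + 1/(2*t+1) ≤ 1/t := by
      rw [← add_div, div_le_div_iff₀ (by linarith) ht]
      ring_nf
      nlinarith
    linarith
  calc dist x z ≤ dist x y + dist y z := dist_triangle x y z
  _ < 1/a + 1/b := by linarith [hd2]
  _ ≤ 1/t := h1t

lemma nrel_comp {t a b : ℝ} {X Y Z : Set (E n)} (ht : 0 < t)
    (ha : 2 * t + 1 ≤ a) (hb : 2 * t + 1 ≤ b)
    (h1 : Nrel n a X Y) (h2 : Nrel n b Y Z) : Nrel n t X Z :=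
  ⟨nrelL_comp ht ha hb h1.1 h2.1, nrelL_comp ht hb ha h2.2 h1.2⟩

lemma mem_tr {v x : E n} {S : Set (E n)} : x ∈ tr v S ↔ x + v ∈ S := by
  unfold tr
  constructor
  · rintro ⟨s, hs, rfl⟩; simpa using hs
  · intro h; exact ⟨x + v, h, add_sub_cancel_right x v⟩

lemma tr_tr {v w : E n} {S : Set (E n)} : tr v (tr w S) = tr (v + w) S := by
  ext x; rw [mem_tr, mem_tr, mem_tr, add_assoc]

lemma tr_zero {S : Set (E n)} : tr (0 : E n) S = S := by
  ext x; simp [mem_tr]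

lemma nrelL_tr {b : ℝ} {v : E n} {S S' : Set (E n)} (hb : 0 < b)
    (h : NrelL n (b + ‖v‖) S S') : NrelL n b (tr v S) (tr v S') := by
  rw [nrelL_def] at h ⊢
  intro x hx hxb
  obtain ⟨y, hy, hd⟩ := h (x + v) (mem_tr.1 hx) (by
    calc ‖x + v‖ ≤ ‖x‖ + ‖v‖ := norm_add_le x v
    _ < b + ‖v‖ := by linarith)
  refine ⟨y - v, mem_tr.2 (by simpa using hy), ?_⟩
  have : dist x (y - v) = dist (x + v) y := by
    rw [dist_eq_norm, dist_eq_norm]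
    congr 1; abel
  rw [this]
  refine lt_of_lt_of_le hd (one_div_le_one_div_of_le hb (by linarith [norm_nonneg v]))

lemma nrel_tr {b : ℝ} {v : E n} {S S' : Set (E n)} (hb : 0 < b)
    (h : Nrel n (b + ‖v‖) S S') : Nrel n b (tr v S) (tr v S') :=
  ⟨nrelL_tr hb h.1, nrelL_tr hb h.2⟩

lemma tr_mem_Del {ε δ : ℝ} {v : E n} {S : Set (E n)} (hS : S ∈ Del n ε δ) :
    tr v S ∈ Del n ε δ := by
  obtain ⟨hdense, hsep⟩ := hS
  constructor
  · intro x
    obtain ⟨y, hy, hd⟩ := hdense (x + v)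
    exact ⟨y - v, mem_tr.2 (by simpa using hy), by
      rw [show dist x (y - v) = dist (x + v) y by rw [dist_eq_norm, dist_eq_norm]; congr 1; abel]
      exact hd⟩
  · intro x hx y hy hxy
    have hne : x + v ≠ y + v := fun h => hxy (by simpa using congrArg (fun z => z - v) h)
    have := hsep (x + v) (mem_tr.1 hx) (y + v) (mem_tr.1 hy) hne
    simpa [dist_add_right] using this

lemma coord_le_norm (x : E n) (i : Fin n) : |x i| ≤ ‖x‖ := by
  rw [EuclideanSpace.norm_eq]
  have h1 : |x i| = Real.sqrt (‖x i‖ ^ 2) := by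
    rw [Real.norm_eq_abs, Real.sqrt_sq_eq_abs, abs_abs]
  rw [h1]
  apply Real.sqrt_le_sqrt
  have : ‖x i‖ ^ 2 ≤ ∑ j : Fin n, ‖x j‖ ^ 2 :=
    Finset.single_le_sum (f := fun j => ‖x j‖ ^ 2) (fun j _ => by positivity) (Finset.mem_univ i)
  exact this

lemma norm_le_sum_coord (x : E n) : ‖x‖ ≤ ∑ i : Fin n, |x i| := by
  have hx : x = ∑ i : Fin n, EuclideanSpace.single i (x i) := by
    ext j
    rw [WithLp.ofLp_sum, Fintype.sum_apply]
    simp [EuclideanSpace.single_apply]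
  calc ‖x‖ = ‖∑ i : Fin n, EuclideanSpace.single i (x i)‖ := by rw [← hx]
  _ ≤ ∑ i : Fin n, ‖EuclideanSpace.single i (x i)‖ := norm_sum_le _ _
  _ = ∑ i : Fin n, |x i| := by
      apply Finset.sum_congr rfl
      intro i _
      rw [EuclideanSpace.norm_single]
      simp

/-- A bounded `δ`-separated set is finite. -/
lemma finite_of_separated_bounded {δ R : ℝ} (hδ : 0 < δ) {S : Set (E n)}
    (hsep : IsSeparated' δ S) (hbd : S ⊆ closedBall (0 : E n) R) : S.Finite := by
  have hcb : IsCompact (closedBall (0 : E n) R) := isCompact_closedBall _ _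
  have hcover : closedBall (0 : E n) R ⊆ ⋃ y : E n, ball y (δ / 2) := by
    intro y _
    exact Set.mem_iUnion.2 ⟨y, mem_ball_self (by linarith)⟩
  obtain ⟨t, ht⟩ := hcb.elim_finite_subcover (fun y : E n => ball y (δ / 2))
    (fun y => isOpen_ball) hcover
  rw [Set.finite_coe_iff.symm]
  have hf : ∀ s : S, ∃ y ∈ t, (s : E n) ∈ ball y (δ / 2) := by
    intro s
    have := ht (hbd s.2)
    simpa using this
  choose f hft hfb using hf
  have : Function.Injective f := by
    intro s s' hss
    by_contra hne
    have hne' : (s : E n) ≠ (s' : E n) := fun h => hne (Subtype.ext h)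
    have := hsep s s.2 s' s'.2 hne'
    have hd : dist (s : E n) (s' : E n) < δ := by
      have h1 := mem_ball.1 (hfb s)
      have h2 := mem_ball.1 (hfb s')
      calc dist (s : E n) (s' : E n) ≤ dist (s : E n) (f s) + dist (f s') (s' : E n) := by
            rw [hss]; exact dist_triangle _ _ _
      _ < δ / 2 + δ / 2 := by rw [dist_comm (f s') (s' : E n)]; linarith
      _ = δ := by ring
    linarith
  exact Finite.of_injective (fun s : S => (⟨f s, hft s⟩ : {y // y ∈ t}))
    (fun s s' h => this (congrArg Subtype.val h))

/-- Zorn: maximal separated extension inside a region `W`, over a base `K`. -/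
lemma exists_maximal_separated (δ : ℝ) (K W : Set (E n)) (hK : IsSeparated' δ K) :
    ∃ M ⊆ W, IsSeparated' δ (K ∪ M) ∧
      ∀ x ∈ W, (∀ y ∈ K ∪ M, y ≠ x → δ ≤ dist x y) → x ∈ M := by
  set 𝒮 : Set (Set (E n)) := {T | T ⊆ W ∧ IsSeparated' δ (K ∪ T)} with h𝒮
  have hzorn : ∃ M, Maximal (· ∈ 𝒮) M := by
    apply zorn_subset
    intro c hc hchain
    refine ⟨⋃₀ c, ⟨?_, ?_⟩, fun s hs => Set.subset_sUnion_of_mem hs⟩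
    · intro x hx
      obtain ⟨T, hT, hxT⟩ := hx
      exact (hc hT).1 hxT
    · intro x hx y hy hxy
      rcases hx with hx | hx
      · rcases hy with hy | hy
        · exact hK x hx y hy hxy
        · obtain ⟨T, hT, hyT⟩ := hy
          exact (hc hT).2 x (Or.inl hx) y (Or.inr hyT) hxy
      · obtain ⟨T, hT, hxT⟩ := hx
        rcases hy with hy | hy
        · exact (hc hT).2 x (Or.inr hxT) y (Or.inl hy) hxy
        · obtain ⟨T', hT', hyT'⟩ := hy
          rcases hchain.total hT hT' with h | h
          · exact (hc hT').2 x (Or.inr (h hxT)) y (Or.inr hyT') hxy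
          · exact (hc hT).2 x (Or.inr hxT) y (Or.inr (h hyT')) hxy
  obtain ⟨M, hM⟩ := hzorn
  refine ⟨M, hM.1.1, hM.1.2, ?_⟩
  intro x hxW hxfar
  have hMx : M ∪ {x} ∈ 𝒮 := by
    constructor
    · intro y hy
      rcases hy with hy | hy
      · exact hM.1.1 hy
      · rw [Set.mem_singleton_iff] at hy; subst hy; exact hxW
    · intro a ha b hb hab
      have key : ∀ a ∈ K ∪ M, a ≠ x → δ ≤ dist a x := by
        intro a ha hax
        rw [dist_comm]; exact hxfar a ha hax
      rcases ha with ha | (ha | ha) <;> rcases hb with hb | (hb | hb)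
      · exact hM.1.2 a (Or.inl ha) b (Or.inl hb) hab
      · exact hM.1.2 a (Or.inl ha) b (Or.inr hb) hab
      · rw [Set.mem_singleton_iff] at hb; subst hb
        exact key a (Or.inl ha) hab
      · exact hM.1.2 a (Or.inr ha) b (Or.inl hb) hab
      · exact hM.1.2 a (Or.inr ha) b (Or.inr hb) hab
      · rw [Set.mem_singleton_iff] at hb; subst hb
        exact key a (Or.inr ha) hab
      · rw [Set.mem_singleton_iff] at ha; subst ha
        rw [dist_comm]; exact key b (Or.inl hb) (Ne.symm hab)
      · rw [Set.mem_singleton_iff] at ha; subst ha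
        rw [dist_comm]; exact key b (Or.inr hb) (Ne.symm hab)
      · rw [Set.mem_singleton_iff] at ha hb; subst ha; subst hb; exact absurd rfl hab
  have := hM.2 hMx (Set.subset_union_left)
  exact this (Or.inr rfl)

/-- Gluing: a Delone set agreeing with `S` near `0` and with a translate of `P` far away. -/
lemma glue {ε δ : ℝ} (hδ : 0 < δ) (hεδ : δ ≤ ε) {S P : Set (E n)}
    (hS : S ∈ Del n ε δ) (hP : P ∈ Del n ε δ) {r ρ : ℝ} (hr : 0 < r) (hρ : 0 < ρ) :
    ∃ S'' ∈ Del n ε δ, Nrel n r S S'' ∧ ∃ v : E n, Nrel n ρ (tr v S'') P := by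
  have hε : 0 < ε := lt_of_lt_of_le hδ hεδ
  rcases Nat.eq_zero_or_pos n with hn | hn
  · -- degenerate case `n = 0`: the space is a single point
    subst hn
    refine ⟨S, hS, nrel_refl hr S, 0, ?_⟩
    have hsub : Subsingleton (E 0) := by
      constructor; intro a b; ext i; exact absurd i.2 (by omega)
    rw [tr_zero]
    obtain ⟨p, hp, _⟩ := hP.1 0
    obtain ⟨s, hs, _⟩ := hS.1 0
    constructor
    · intro x hx
      refine mem_add_ball.2 ⟨p, hp, ?_⟩
      rw [hsub.allEq x p]
      simpa using one_div_pos.2 hρ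
    · intro x hx
      refine mem_add_ball.2 ⟨s, hs, ?_⟩
      rw [hsub.allEq x s]
      simpa using one_div_pos.2 hρ
  · set r₁ := r + 2*ε + δ with hr₁
    set m₁ := ρ + 2*ε + δ with hm₁
    set R := r₁ + m₁ + δ with hR
    have hRpos : 0 < R := by positivity
    set i0 : Fin n := ⟨0, hn⟩
    set v : E n := EuclideanSpace.single i0 R with hv
    have hvnorm : ‖v‖ = R := by
      rw [hv, EuclideanSpace.norm_single, Real.norm_eq_abs, abs_of_pos hRpos]
    set K : Set (E n) := (S ∩ closedBall (0 : E n) r₁) ∪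
      ((fun p => p + v) '' P ∩ closedBall v m₁) with hK
    set W : Set (E n) := {x : E n | r + ε + δ ≤ ‖x‖ ∧ ρ + ε + δ ≤ dist x v} with hW
    have hKsep : IsSeparated' δ K := by
      rintro x hx y hy hxy
      rcases hx with ⟨hxS, hxb⟩ | ⟨⟨p, hp, rfl⟩, hxb⟩
      · rcases hy with ⟨hyS, hyb⟩ | ⟨⟨q, hq, rfl⟩, hyb⟩
        · exact hS.2 x hxS y hyS hxy
        · -- cross : x near 0, y near v
          have h1 : dist x 0 ≤ r₁ := mem_closedBall.1 hxb
          have h2 : dist (q + v) v ≤ m₁ := mem_closedBall.1 hyb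
          have h3 : dist (0:E n) v ≤ dist 0 x + dist x (q+v) + dist (q+v) v :=
            dist_triangle4 _ _ _ _
          have h4 : dist (0:E n) v = R := by rw [dist_comm, dist_zero_right, hvnorm]
          rw [dist_comm] at h1
          linarith [h3, h4 ▸ h3]
      · rcases hy with ⟨hyS, hyb⟩ | ⟨⟨q, hq, rfl⟩, hyb⟩
        · have h1 : dist y 0 ≤ r₁ := mem_closedBall.1 hyb
          have h2 : dist (p + v) v ≤ m₁ := mem_closedBall.1 hxb
          have h3 : dist (0:E n) v ≤ dist 0 y + dist y (p+v) + dist (p+v) v :=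
            dist_triangle4 _ _ _ _
          have h4 : dist (0:E n) v = R := by rw [dist_comm, dist_zero_right, hvnorm]
          rw [dist_comm] at h1
          rw [dist_comm]
          linarith [h4 ▸ h3]
        · have := hP.2 p hp q hq (fun h => hxy (by rw [h]))
          rwa [dist_add_right]
    obtain ⟨M, hMW, hsep, hmax⟩ := exists_maximal_separated δ K W hKsep
    set S'' := K ∪ M with hS''
    have hdense : ∀ x : E n, ∃ y ∈ S'', dist x y ≤ ε := by
      intro x
      by_cases h1 : ‖x‖ < r + ε + δ
      · obtain ⟨s, hs, hds⟩ := hS.1 x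
        refine ⟨s, Or.inl (Or.inl ⟨hs, ?_⟩), hds⟩
        rw [mem_closedBall, dist_zero_right]
        have : ‖s‖ ≤ ‖x‖ + dist x s := by
          have := norm_le_norm_add_norm_sub' s x
          rw [dist_eq_norm, norm_sub_rev]
          linarith
        linarith
      · by_cases h2 : dist x v < ρ + ε + δ
        · obtain ⟨p, hp, hdp⟩ := hP.1 (x - v)
          refine ⟨p + v, Or.inl (Or.inr ⟨⟨p, hp, rfl⟩, ?_⟩), ?_⟩
          · rw [mem_closedBall, dist_eq_norm, show p + v - v = p by abel]
            have hp1 : ‖p‖ ≤ ‖x - v‖ + dist (x - v) p := by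
              have h := norm_le_norm_add_norm_sub' p (x - v)
              rw [dist_eq_norm, norm_sub_rev (x - v) p]
              exact h
            have hp2 : ‖x - v‖ < ρ + ε + δ := by rw [← dist_eq_norm]; exact h2
            rw [hm₁]
            linarith
          · rw [dist_eq_norm, show x - (p + v) = (x - v) - p by abel, ← dist_eq_norm]
            exact hdp
        · have hxW : x ∈ W := ⟨le_of_not_gt h1, le_of_not_gt h2⟩
          by_cases hxM : x ∈ M
          · exact ⟨x, Or.inr hxM, by simp [hδ.le, hε.le]⟩
          · have : ¬ (∀ y ∈ K ∪ M, y ≠ x → δ ≤ dist x y) := fun h => hxM (hmax x hxW h)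
            push_neg at this
            obtain ⟨y, hy, hyne, hyd⟩ := this
            exact ⟨y, hy, le_trans hyd.le hεδ⟩
    have hS''Del : S'' ∈ Del n ε δ := ⟨hdense, hsep⟩
    have hball0 : S'' ∩ ball (0 : E n) r = S ∩ ball (0 : E n) r := by
      ext x
      constructor
      · rintro ⟨hx, hxb⟩
        have hxr : ‖x‖ < r := by simpa [dist_zero_right] using mem_ball.1 hxb
        rcases hx with (⟨hxS, _⟩ | ⟨⟨p, hp, rfl⟩, hcb⟩) | hxM
        · exact ⟨hxS, hxb⟩
        · exfalso
          have h2 : dist (p + v) v ≤ m₁ := mem_closedBall.1 hcb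
          have h3 : R = ‖v‖ := hvnorm.symm
          have h4 : ‖v‖ ≤ ‖p + v‖ + dist (p+v) v := by
            rw [dist_eq_norm, show p + v - v = p by abel]
            have := norm_le_norm_add_norm_sub' v (p + v)
            rw [show v - (p + v) = -p by abel, norm_neg] at this
            linarith
          have h5 : ‖p + v‖ < r := hxr
          rw [hR] at h3
          rw [dist_eq_norm, show p + v - v = p by abel] at h2
          rw [dist_eq_norm, show p + v - v = p by abel] at h4
          have : r₁ + m₁ + δ ≤ r + m₁ := by linarith
          rw [hr₁] at this
          linarith
        · exfalso
          have := (hMW hxM).1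
          linarith
      · rintro ⟨hxS, hxb⟩
        refine ⟨Or.inl (Or.inl ⟨hxS, ?_⟩), hxb⟩
        rw [mem_closedBall, dist_zero_right]
        have : ‖x‖ < r := by simpa [dist_zero_right] using mem_ball.1 hxb
        linarith
    have hballv : tr v S'' ∩ ball (0 : E n) ρ = P ∩ ball (0 : E n) ρ := by
      ext x
      constructor
      · rintro ⟨hx, hxb⟩
        have hxρ : ‖x‖ < ρ := by simpa [dist_zero_right] using mem_ball.1 hxb
        have hxv : x + v ∈ S'' := mem_tr.1 hx
        rcases hxv with (⟨hxS, hcb⟩ | ⟨⟨p, hp, hpe⟩, _⟩) | hxM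
        · exfalso
          have h1 : ‖x + v‖ ≤ r₁ := by
            simpa [dist_zero_right] using mem_closedBall.1 hcb
          have h2 : ‖v‖ ≤ ‖x + v‖ + ‖x‖ := by
            have := norm_le_norm_add_norm_sub' v (x + v)
            rw [show v - (x + v) = -x by abel, norm_neg] at this
            linarith
          rw [hvnorm] at h2
          rw [hR, hm₁] at h2
          linarith
        · have : x = p := by
            have := hpe
            have : p + v = x + v := hpe
            exact (add_right_cancel this).symm
          rw [this]
          exact ⟨hp, this ▸ hxb⟩
        · exfalso
          have := (hMW hxM).2
          rw [dist_eq_norm, show x + v - v = x by abel] at this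
          linarith
      · rintro ⟨hxP, hxb⟩
        have hxρ : ‖x‖ < ρ := by simpa [dist_zero_right] using mem_ball.1 hxb
        refine ⟨mem_tr.2 (Or.inl (Or.inr ⟨⟨x, hxP, rfl⟩, ?_⟩)), hxb⟩
        rw [mem_closedBall, dist_eq_norm, show x + v - v = x by abel]
        rw [hm₁]
        linarith
    exact ⟨S'', hS''Del, nrel_of_eq_on_ball hr hball0.symm, v, nrel_of_eq_on_ball hρ hballv⟩

/-- Zorn with invariance under a set `Λ` of translations. -/
lemma exists_maximal_separated_invariant (δ : ℝ) (K W Λ : Set (E n))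
    (hΛ0 : (0:E n) ∈ Λ) (hΛsub : ∀ a ∈ Λ, ∀ b ∈ Λ, a - b ∈ Λ)
    (hΛsep : ∀ l ∈ Λ, l ≠ 0 → δ ≤ ‖l‖)
    (hKinv : ∀ l ∈ Λ, ∀ x ∈ K, x + l ∈ K)
    (hWinv : ∀ l ∈ Λ, ∀ x ∈ W, x + l ∈ W)
    (hK : IsSeparated' δ K) :
    ∃ M ⊆ W, IsSeparated' δ (K ∪ M) ∧ (∀ l ∈ Λ, ∀ x ∈ M, x + l ∈ M) ∧
      ∀ x ∈ W, (∀ y ∈ K ∪ M, y ≠ x → δ ≤ dist x y) → x ∈ M := by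
  have hΛneg : ∀ l ∈ Λ, -l ∈ Λ := fun l hl => by simpa using hΛsub 0 hΛ0 l hl
  have hΛadd : ∀ a ∈ Λ, ∀ b ∈ Λ, a + b ∈ Λ := fun a ha b hb => by
    simpa [sub_neg_eq_add] using hΛsub a ha (-b) (hΛneg b hb)
  set 𝒮 : Set (Set (E n)) :=
    {T | T ⊆ W ∧ IsSeparated' δ (K ∪ T) ∧ ∀ l ∈ Λ, ∀ x ∈ T, x + l ∈ T} with h𝒮
  have hzorn : ∃ M, Maximal (· ∈ 𝒮) M := by
    apply zorn_subset
    intro c hc hchain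
    refine ⟨⋃₀ c, ⟨?_, ?_, ?_⟩, fun s hs => Set.subset_sUnion_of_mem hs⟩
    · rintro x ⟨T, hT, hxT⟩
      exact (hc hT).1 hxT
    · intro x hx y hy hxy
      rcases hx with hx | ⟨T, hT, hxT⟩
      · rcases hy with hy | ⟨T', hT', hyT'⟩
        · exact hK x hx y hy hxy
        · exact (hc hT').2.1 x (Or.inl hx) y (Or.inr hyT') hxy
      · rcases hy with hy | ⟨T', hT', hyT'⟩
        · exact (hc hT).2.1 x (Or.inr hxT) y (Or.inl hy) hxy
        · rcases hchain.total hT hT' with h | h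
          · exact (hc hT').2.1 x (Or.inr (h hxT)) y (Or.inr hyT') hxy
          · exact (hc hT).2.1 x (Or.inr hxT) y (Or.inr (h hyT')) hxy
    · rintro l hl x ⟨T, hT, hxT⟩
      exact ⟨T, hT, (hc hT).2.2 l hl x hxT⟩
  obtain ⟨M, hM⟩ := hzorn
  refine ⟨M, hM.1.1, hM.1.2.1, hM.1.2.2, ?_⟩
  intro x hxW hxfar
  set T' : Set (E n) := M ∪ {y | ∃ l ∈ Λ, y = x + l} with hT'
  have hT'mem : T' ∈ 𝒮 := by
    refine ⟨?_, ?_, ?_⟩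
    · rintro y (hy | ⟨l, hl, rfl⟩)
      · exact hM.1.1 hy
      · exact hWinv l hl x hxW
    · -- separation of K ∪ T'
      have key : ∀ y ∈ K ∪ M, ∀ l ∈ Λ, y ≠ x + l → δ ≤ dist (x + l) y := by
        intro y hy l hl hne
        have hyl : y + -l ∈ K ∪ M := by
          rcases hy with hy | hy
          · exact Or.inl (hKinv (-l) (hΛneg l hl) y hy)
          · exact Or.inr (hM.1.2.2 (-l) (hΛneg l hl) y hy)
        have hyne : y + -l ≠ x := by
          intro h
          exact hne (by rw [← h]; abel)
        have hfar := hxfar (y + -l) hyl hyne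
        have heq : dist (x + l) y = dist x (y + -l) := by
          rw [dist_eq_norm, dist_eq_norm]
          congr 1; abel
        rw [heq]
        exact hfar
      intro a ha b hb hab
      rcases ha with ha | (ha | ⟨l, hl, rfl⟩) <;>
        rcases hb with hb | (hb | hb)
      · exact hM.1.2.1 a (Or.inl ha) b (Or.inl hb) hab
      · exact hM.1.2.1 a (Or.inl ha) b (Or.inr hb) hab
      · obtain ⟨l, hl, rfl⟩ := hb
        rw [dist_comm]
        exact key a (Or.inl ha) l hl hab
      · exact hM.1.2.1 a (Or.inr ha) b (Or.inl hb) hab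
      · exact hM.1.2.1 a (Or.inr ha) b (Or.inr hb) hab
      · obtain ⟨l, hl, rfl⟩ := hb
        rw [dist_comm]
        exact key a (Or.inr ha) l hl hab
      · exact key b (Or.inl hb) l hl (Ne.symm hab)
      · exact key b (Or.inr hb) l hl (Ne.symm hab)
      · obtain ⟨l', hl', rfl⟩ := hb
        have hll : l - l' ≠ 0 := by
          intro h
          apply hab
          have : l = l' := by
            have := sub_eq_zero.1 h
            exact this
          rw [this]
        have := hΛsep (l - l') (hΛsub l hl l' hl') hll
        have heq : dist (x + l) (x + l') = ‖l - l'‖ := by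
          rw [dist_eq_norm]
          congr 1; abel
        rw [heq]
        exact this
    · rintro l hl y (hy | ⟨l', hl', rfl⟩)
      · exact Or.inl (hM.1.2.2 l hl y hy)
      · exact Or.inr ⟨l' + l, hΛadd l' hl' l hl, by abel⟩
  have hsub : M ⊆ T' := Set.subset_union_left
  have := hM.2 hT'mem hsub
  exact this (Or.inr ⟨0, hΛ0, by abel⟩)

/-- Periodization: a `cℤⁿ`-periodic Delone set agreeing with `S'` on `ball 0 r`. -/
lemma periodize {ε δ : ℝ} (hδ : 0 < δ) (hεδ : δ ≤ ε) {S' : Set (E n)}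
    (hS' : S' ∈ Del n ε δ) {r c : ℝ} (hr : 0 < r)
    (hc : 2*(r + 2*ε + δ) + δ ≤ c) :
    ∃ P ∈ Del n ε δ,
      (∀ z : Fin n → ℤ, tr (WithLp.toLp 2 (fun j => c * (z j : ℝ))) P = P) ∧ Nrel n r S' P := by
  have hε : 0 < ε := lt_of_lt_of_le hδ hεδ
  set ρ : ℝ := r + 2*ε + δ with hρ
  have hρpos : 0 < ρ := by positivity
  have hcpos : 0 < c := by linarith
  set Λ : Set (E n) := {x | ∃ z : Fin n → ℤ, ∀ j, x j = c * (z j : ℝ)} with hΛ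
  have hΛ0 : (0:E n) ∈ Λ := ⟨0, fun j => by simp⟩
  have hΛsub : ∀ a ∈ Λ, ∀ b ∈ Λ, a - b ∈ Λ := by
    rintro a ⟨za, hza⟩ b ⟨zb, hzb⟩
    refine ⟨za - zb, fun j => ?_⟩
    have : (a - b) j = a j - b j := rfl
    rw [this, hza j, hzb j, Pi.sub_apply]
    push_cast
    ring
  have hΛnorm : ∀ l ∈ Λ, l ≠ 0 → c ≤ ‖l‖ := by
    rintro l ⟨z, hz⟩ hl
    have : ∃ j, l j ≠ 0 := by
      by_contra h
      push_neg at h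
      exact hl (by ext j; exact h j)
    obtain ⟨j, hj⟩ := this
    have hzj : z j ≠ 0 := by
      intro h
      exact hj (by rw [hz j, h]; simp)
    have h1 : (1:ℝ) ≤ |(z j : ℝ)| := by
      rw [← Int.cast_abs]
      exact_mod_cast Int.one_le_abs (by exact_mod_cast hzj)
    have h2 : c ≤ |l j| := by
      rw [hz j, abs_mul, abs_of_pos hcpos]
      nlinarith
    exact le_trans h2 (coord_le_norm l j)
  have hΛsep : ∀ l ∈ Λ, l ≠ 0 → δ ≤ ‖l‖ := fun l hl hne =>
    le_trans (by linarith) (hΛnorm l hl hne)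
  set core : Set (E n) := S' ∩ closedBall (0 : E n) ρ with hcore
  set K : Set (E n) := {y | ∃ s ∈ core, ∃ l ∈ Λ, y = s + l} with hKdef
  set W : Set (E n) := {x | ∀ l ∈ Λ, r + ε + δ ≤ dist x l} with hWdef
  have hΛadd : ∀ a ∈ Λ, ∀ b ∈ Λ, a + b ∈ Λ := by
    intro a ha b hb
    have hnb : -b ∈ Λ := by simpa using hΛsub 0 hΛ0 b hb
    simpa [sub_neg_eq_add] using hΛsub a ha (-b) hnb
  have hKinv : ∀ l ∈ Λ, ∀ x ∈ K, x + l ∈ K := by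
    rintro l hl x ⟨s, hs, l', hl', rfl⟩
    exact ⟨s, hs, l' + l, hΛadd l' hl' l hl, by abel⟩
  have hWinv : ∀ l ∈ Λ, ∀ x ∈ W, x + l ∈ W := by
    intro l hl x hx l' hl'
    have : dist (x + l) l' = dist x (l' - l) := by
      rw [dist_eq_norm, dist_eq_norm]
      congr 1; abel
    rw [this]
    exact hx (l' - l) (hΛsub l' hl' l hl)
  have hKsep : IsSeparated' δ K := by
    rintro y ⟨s, hs, l, hl, rfl⟩ y' ⟨s', hs', l', hl', rfl⟩ hne
    by_cases hll : l = l'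
    · subst hll
      have hss : s ≠ s' := fun h => hne (by rw [h])
      have := hS'.2 s hs.1 s' hs'.1 hss
      rwa [dist_add_right]
    · have h1 : c ≤ ‖l - l'‖ := hΛnorm (l - l') (hΛsub l hl l' hl') (sub_ne_zero.2 hll)
      have h2 : ‖s‖ ≤ ρ := by simpa [dist_zero_right] using mem_closedBall.1 hs.2
      have h3 : ‖s'‖ ≤ ρ := by simpa [dist_zero_right] using mem_closedBall.1 hs'.2
      have h4 : ‖l - l'‖ ≤ ‖s + l - (s' + l')‖ + ‖s‖ + ‖s'‖ := by
        have : l - l' = (s + l - (s' + l')) - s + s' := by abel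
        rw [this]
        calc ‖s + l - (s' + l') - s + s'‖ ≤ ‖s + l - (s' + l') - s‖ + ‖s'‖ := norm_add_le _ _
        _ ≤ ‖s + l - (s' + l')‖ + ‖s‖ + ‖s'‖ := by
            have := norm_sub_le (s + l - (s' + l')) s
            linarith
      rw [dist_eq_norm]
      linarith
  obtain ⟨M, hMW, hsep, hMinv, hmax⟩ :=
    exists_maximal_separated_invariant δ K W Λ hΛ0 hΛsub hΛsep hKinv hWinv hKsep
  set P : Set (E n) := K ∪ M with hPdef
  have hPdense : ∀ x : E n, ∃ y ∈ P, dist x y ≤ ε := by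
    intro x
    by_cases hx : x ∈ W
    · by_cases hxM : x ∈ M
      · exact ⟨x, Or.inr hxM, by simp [hε.le]⟩
      · have : ¬ (∀ y ∈ K ∪ M, y ≠ x → δ ≤ dist x y) := fun h => hxM (hmax x hx h)
        push_neg at this
        obtain ⟨y, hy, hyne, hyd⟩ := this
        exact ⟨y, hy, le_trans hyd.le hεδ⟩
    · rw [hWdef, Set.mem_setOf_eq] at hx
      push_neg at hx
      obtain ⟨l, hl, hld⟩ := hx
      obtain ⟨s, hs, hds⟩ := hS'.1 (x - l)
      have hsnorm : ‖s‖ ≤ ρ := by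
        have h1 : ‖s‖ ≤ ‖x - l‖ + dist (x - l) s := by
          have h := norm_le_norm_add_norm_sub' s (x - l)
          rw [dist_eq_norm, norm_sub_rev (x - l) s]
          exact h
        have h2 : ‖x - l‖ < r + ε + δ := by rw [← dist_eq_norm]; exact hld
        rw [hρ]
        linarith
      refine ⟨s + l, Or.inl ⟨s, ⟨hs, by simpa [dist_zero_right] using hsnorm⟩, l, hl, rfl⟩, ?_⟩
      have : dist x (s + l) = dist (x - l) s := by
        rw [dist_eq_norm, dist_eq_norm]
        congr 1; abel
      rw [this]
      exact hds
  have hPDel : P ∈ Del n ε δ := ⟨hPdense, hsep⟩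
  have hball : P ∩ ball (0 : E n) r = S' ∩ ball (0 : E n) r := by
    ext x
    constructor
    · rintro ⟨hx, hxb⟩
      have hxr : ‖x‖ < r := by simpa [dist_zero_right] using mem_ball.1 hxb
      rcases hx with ⟨s, hs, l, hl, rfl⟩ | hxM
      · by_cases hl0 : l = 0
        · subst hl0
          simp only [add_zero] at hxb ⊢
          exact ⟨hs.1, hxb⟩
        · exfalso
          have h1 : c ≤ ‖l‖ := hΛnorm l hl hl0
          have h2 : ‖s‖ ≤ ρ := by simpa [dist_zero_right] using mem_closedBall.1 hs.2
          have h3 : ‖l‖ ≤ ‖s + l‖ + ‖s‖ := by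
            have h := norm_sub_le (s + l) s
            have heq : s + l - s = l := by abel
            rwa [heq] at h
          have h4 : ‖s + l‖ < r := hxr
          rw [hρ] at hc h2
          linarith
      · exfalso
        have h := hMW hxM 0 hΛ0
        rw [dist_zero_right] at h
        linarith
    · rintro ⟨hxS, hxb⟩
      have hxr : ‖x‖ < r := by simpa [dist_zero_right] using mem_ball.1 hxb
      refine ⟨Or.inl ⟨x, ⟨hxS, by simp [dist_zero_right]; rw [hρ]; linarith⟩, 0, hΛ0, by abel⟩, hxb⟩
  have hPinv : ∀ l ∈ Λ, ∀ x, x ∈ P → x + l ∈ P := by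
    rintro l hl x (hx | hx)
    · exact Or.inl (hKinv l hl x hx)
    · exact Or.inr (hMinv l hl x hx)
  have hper : ∀ z : Fin n → ℤ, tr (WithLp.toLp 2 (fun j => c * (z j : ℝ))) P = P := by
    intro z
    set lz : E n := WithLp.toLp 2 (fun j => c * (z j : ℝ)) with hlz
    have hlzΛ : lz ∈ Λ := ⟨z, fun j => rfl⟩
    have hlznegΛ : -lz ∈ Λ := by simpa using hΛsub 0 hΛ0 lz hlzΛ
    ext x
    rw [mem_tr]
    constructor
    · intro h
      have := hPinv (-lz) hlznegΛ (x + lz) h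
      simpa using this
    · intro h
      exact hPinv lz hlzΛ x h
  exact ⟨P, hPDel, hper, nrel_of_eq_on_ball hr hball.symm⟩

lemma sep_mono {δ' : ℝ} {S T : Set (E n)} (h : IsSeparated' δ' S) (hts : T ⊆ S) :
    IsSeparated' δ' T := fun x hx y hy hxy => h x (hts hx) y (hts hy) hxy

/-- Coercion of a rational vector into Euclidean space. -/
def Qc (n : ℕ) (q : Fin n → ℚ) : E n := WithLp.toLp 2 (fun j => (q j : ℝ))

lemma exists_rat_approx (x : E n) {η : ℝ} (hη : 0 < η) :
    ∃ q : Fin n → ℚ, dist x (Qc n q) < η := by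
  set η' : ℝ := η / (n + 1) with hη'
  have hη'pos : 0 < η' := by positivity
  have h : ∀ j : Fin n, ∃ q : ℚ, |x j - (q:ℝ)| < η' := by
    intro j
    obtain ⟨q, hq1, hq2⟩ := exists_rat_btwn (sub_lt_self (x j) hη'pos)
    refine ⟨q, ?_⟩
    rw [abs_sub_lt_iff]
    constructor <;> linarith
  choose q hq using h
  refine ⟨q, ?_⟩
  rw [dist_eq_norm]
  have hb := norm_le_sum_coord (x - (Qc n q) : E n)
  have hcoord : ∀ j : Fin n, |(x - (Qc n q) : E n) j| = |x j - (q j : ℝ)| := by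
    intro j; rfl
  have h1 : ∑ j : Fin n, |(x - (Qc n q) : E n) j| ≤ n * η' := by
    calc ∑ j : Fin n, |(x - (Qc n q) : E n) j|
        ≤ ∑ _j : Fin n, η' := by
          apply Finset.sum_le_sum
          intro j _
          rw [hcoord j]
          exact (hq j).le
    _ = n * η' := by simp [mul_comm]
  have h2 : (n:ℝ) * η' < η := by
    have hkey : ((n:ℝ) + 1) * η' = η := by
      rw [hη']
      field_simp
    nlinarith
  linarith

/-- Discretized closeness certificate. -/
def GoodD (n : ℕ) (ε δ : ℝ) (A : Finset (Fin n → ℚ)) (k : ℕ) (D : Set (E n)) : Prop :=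
  D ∈ Del n ε δ ∧
  (∀ a ∈ A, ∃ d ∈ D, dist (Qc n a) d < 1/((k:ℝ)+1)) ∧
  (∀ d ∈ D, ‖d‖ < (k:ℝ)+1 → ∃ a ∈ A, dist d (Qc n a) < 1/((k:ℝ)+1))

lemma good_exists {ε δ : ℝ} (hδ : 0 < δ) {S' : Set (E n)} (hS' : S' ∈ Del n ε δ) (k : ℕ) :
    ∃ A : Finset (Fin n → ℚ), GoodD n ε δ A k S' := by
  have hfin : (S' ∩ closedBall (0:E n) ((k:ℝ)+1)).Finite :=
    finite_of_separated_bounded hδ (sep_mono hS'.2 Set.inter_subset_left)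
      Set.inter_subset_right
  have happrox : ∀ d : E n, ∃ q : Fin n → ℚ, dist d (Qc n q) < 1/((k:ℝ)+1) :=
    fun d => exists_rat_approx d (by positivity)
  choose f hf using happrox
  refine ⟨hfin.toFinset.image f, hS', ?_, ?_⟩
  · intro a ha
    rw [Finset.mem_image] at ha
    obtain ⟨d, hd, rfl⟩ := ha
    rw [Set.Finite.mem_toFinset] at hd
    exact ⟨d, hd.1, by rw [dist_comm]; exact hf d⟩
  · intro d hd hdk
    refine ⟨f d, Finset.mem_image_of_mem f (hfin.mem_toFinset.2 ⟨hd, ?_⟩), hf d⟩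
    rw [mem_closedBall, dist_zero_right]
    exact hdk.le

lemma good_good_nrel {ε δ : ℝ} {A : Finset (Fin n → ℚ)} {k : ℕ} {D D' : Set (E n)}
    (h1 : GoodD n ε δ A k D) (h2 : GoodD n ε δ A k D') {τ : ℝ} (hτ : 0 < τ)
    (hτk : 2*τ ≤ (k:ℝ)) : Nrel n τ D D' := by
  have hk1 : (0:ℝ) < (k:ℝ)+1 := by positivity
  have key : ∀ D₁ D₂ : Set (E n), GoodD n ε δ A k D₁ → GoodD n ε δ A k D₂ →
      NrelL n τ D₁ D₂ := by
    intro D₁ D₂ g1 g2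
    rw [nrelL_def]
    intro x hx hxτ
    obtain ⟨a, ha, hda⟩ := g1.2.2 x hx (by linarith)
    obtain ⟨d, hd, hdd⟩ := g2.2.1 a ha
    refine ⟨d, hd, ?_⟩
    have htri : dist x d ≤ dist x (Qc n a) + dist (Qc n a) d :=
      dist_triangle _ _ _
    have hsum : 2/((k:ℝ)+1) ≤ 1/τ := by
      rw [div_le_div_iff₀ hk1 hτ]
      linarith
    have h2k : 1/((k:ℝ)+1) + 1/((k:ℝ)+1) = 2/((k:ℝ)+1) := by ring
    linarith
  exact ⟨key D D' h1 h2, key D' D h2 h1⟩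

open Classical in
noncomputable def theD (n : ℕ) (ε δ : ℝ) (A : Finset (Fin n → ℚ)) (k : ℕ) : Set (E n) :=
  if h : ∃ D, GoodD n ε δ A k D then h.choose else ∅

lemma theD_good {ε δ : ℝ} {A : Finset (Fin n → ℚ)} {k : ℕ}
    (h : ∃ D, GoodD n ε δ A k D) : GoodD n ε δ A k (theD n ε δ A k) := by
  rw [theD, dif_pos h]
  exact h.choose_spec

open Classical in
noncomputable def FF (n : ℕ) (ε δ : ℝ) (i : Finset (Fin n → ℚ) × ℕ × ℕ) :
    Set (Set (E n)) :=
  if ∃ D, GoodD n ε δ i.1 i.2.1 D then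
    {S | S ∈ Del n ε δ ∧ ∃ v : E n, ∃ ρ : ℝ, (i.2.2:ℝ) + 1 < ρ ∧
      Nrel n ρ (tr v S) (theD n ε δ i.1 i.2.1)}
  else Del n ε δ

lemma FF_subset {ε δ : ℝ} (i : Finset (Fin n → ℚ) × ℕ × ℕ) :
    FF n ε δ i ⊆ Del n ε δ := by
  rw [FF]
  split_ifs
  · exact fun S hS => hS.1
  · exact subset_rfl

lemma nrel_squeeze {ρ' ρ b : ℝ} {X Y Z : Set (E n)} (h1 : 1 ≤ ρ') (h2 : ρ' < ρ)
    (hb : ρ' + 1 ≤ b) (hbinv : 1/b + 1/ρ ≤ 1/ρ')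
    (hXY : Nrel n b X Y) (hYZ : Nrel n ρ Y Z) : Nrel n ρ' X Z := by
  have hρ'0 : (0:ℝ) < ρ' := by linarith
  have hρ0 : (0:ℝ) < ρ := by linarith
  have hb0 : (0:ℝ) < b := by linarith
  have hbinv1 : 1/b ≤ 1 := by rw [div_le_one hb0]; linarith
  have hρinv1 : 1/ρ ≤ 1 := by rw [div_le_one hρ0]; linarith
  have hρ'ρmul : 1 ≤ ρ * ρ' := by nlinarith
  have hgap : 1/ρ' - 1/ρ ≤ ρ - ρ' := by
    rw [div_sub_div _ _ (ne_of_gt hρ'0) (ne_of_gt hρ0)]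
    rw [div_le_iff₀ (by positivity)]
    nlinarith
  constructor
  · -- X ∩ ball ρ' ⊆ Z + ball (1/ρ')
    show NrelL n ρ' X Z
    rw [nrel_iff] at hXY hYZ
    have hxy := hXY.1
    have hyz := hYZ.1
    rw [nrelL_def] at hxy hyz ⊢
    intro x hx hxn
    obtain ⟨y, hy, hdy⟩ := hxy x hx (by linarith)
    have hyn : ‖y‖ < ρ := by
      have h := norm_le_norm_add_norm_sub' y x
      rw [norm_sub_rev y x, ← dist_eq_norm] at h
      have : 1/b ≤ 1/ρ' - 1/ρ := by linarith
      linarith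
    obtain ⟨z, hz, hdz⟩ := hyz y hy hyn
    exact ⟨z, hz, by
      have := dist_triangle x y z
      linarith⟩
  · show NrelL n ρ' Z X
    rw [nrel_iff] at hXY hYZ
    have hzy := hYZ.2
    have hyx := hXY.2
    rw [nrelL_def] at hzy hyx ⊢
    intro z hz hzn
    obtain ⟨y, hy, hdy⟩ := hzy z hz (by linarith)
    have hyn : ‖y‖ < b := by
      have h := norm_le_norm_add_norm_sub' y z
      rw [norm_sub_rev y z, ← dist_eq_norm] at h
      linarith
    obtain ⟨x, hx, hdx⟩ := hyx y hy hyn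
    exact ⟨x, hx, by
      have := dist_triangle z y x
      linarith⟩

lemma FF_open {ε δ : ℝ} (i : Finset (Fin n → ℚ) × ℕ × ℕ) :
    IsOpenInDel n ε δ (FF n ε δ i) := by
  rw [FF]
  split_ifs with hex
  · intro S hS
    obtain ⟨hSDel, v, ρ, hρ, hN⟩ := hS
    set m : ℕ := i.2.2
    have hm1 : (1:ℝ) ≤ (m:ℝ) + 1 := by
      have := Nat.cast_nonneg (α := ℝ) m
      linarith
    set ρ' : ℝ := ((m:ℝ) + 1 + ρ)/2 with hρ'
    have hρ'1 : 1 ≤ ρ' := by rw [hρ']; linarith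
    have hρ'ρ : ρ' < ρ := by rw [hρ']; linarith
    have hρ'm : (m:ℝ) + 1 < ρ' := by rw [hρ']; linarith
    have hρ'0 : (0:ℝ) < ρ' := by linarith
    have hρ0 : (0:ℝ) < ρ := by linarith
    have hgap : 0 < 1/ρ' - 1/ρ := by
      have := one_div_lt_one_div_of_lt hρ'0 hρ'ρ
      linarith
    set b : ℝ := max (ρ' + 1) ((1/ρ' - 1/ρ)⁻¹ + 1) with hbdef
    have hb1 : ρ' + 1 ≤ b := le_max_left _ _
    have hb2 : (1/ρ' - 1/ρ)⁻¹ + 1 ≤ b := le_max_right _ _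
    have hb0 : 0 < b := by linarith
    have hbinv : 1/b + 1/ρ ≤ 1/ρ' := by
      have hx0 : 0 < (1/ρ' - 1/ρ)⁻¹ := by positivity
      have h := one_div_le_one_div_of_le hx0 (show (1/ρ' - 1/ρ)⁻¹ ≤ b by linarith)
      rw [one_div, one_div, inv_inv] at h
      rw [one_div]
      linarith
    refine ⟨b + ‖v‖, by positivity, ?_⟩
    intro S' hS'Del hNr
    refine ⟨hS'Del, v, ρ', hρ'm, ?_⟩
    have htr : Nrel n b (tr v S') (tr v S) := nrel_tr hb0 (nrel_symm hNr)
    exact nrel_squeeze hρ'1 hρ'ρ hb1 hbinv htr hN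
  · intro S hS
    exact ⟨1, one_pos, fun S' hS' _ => hS'⟩

lemma FF_dense {ε δ : ℝ} (hδ : 0 < δ) (hεδ : δ ≤ ε) (i : Finset (Fin n → ℚ) × ℕ × ℕ) :
    IsDenseInDel n ε δ (FF n ε δ i) := by
  rw [FF]
  split_ifs with hex
  · intro S hS r hr
    have hD : GoodD n ε δ i.1 i.2.1 (theD n ε δ i.1 i.2.1) := theD_good hex
    obtain ⟨S'', hS''Del, hNr, v, hNv⟩ :=
      glue hδ hεδ hS hD.1 hr (show (0:ℝ) < (i.2.2:ℝ) + 2 by positivity)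
    exact ⟨S'', ⟨hS''Del, v, (i.2.2:ℝ) + 2, by linarith, hNv⟩, hNr⟩
  · intro S hS r hr
    exact ⟨S, hS, nrel_refl hr S⟩

/-- Having period `v` passes to rubber limits of separated sets. -/
lemma period_of_limit {δ' : ℝ} (hδ' : 0 < δ') {S' : Set (E n)} (hsep : IsSeparated' δ' S')
    {v : E n} (h : ∀ ρ : ℝ, 0 < ρ → ∃ T : Set (E n), tr v T = T ∧ Nrel n ρ T S') :
    tr v S' = S' := by
  have hstep : ∀ x ∈ S', ∀ u : E n, (u = v ∨ u = -v) → x + u ∈ S' := by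
    intro x hx u hu
    have hunorm : ‖u‖ = ‖v‖ := by
      rcases hu with rfl | rfl
      · rfl
      · rw [norm_neg]
    have happrox : ∀ ρ : ℝ, ‖x‖ + ‖v‖ + 1 < ρ → ∃ s ∈ S', dist (x + u) s < 2/ρ := by
      intro ρ hρ
      have hρ0 : (0:ℝ) < ρ := by
        have := norm_nonneg x; have := norm_nonneg v; linarith
      have hρ1 : (1:ℝ) ≤ ρ := by
        have := norm_nonneg x; have := norm_nonneg v; linarith
      have hinv1 : 1/ρ ≤ 1 := by rw [div_le_one hρ0]; exact hρ1
      obtain ⟨T, hTper, hTN⟩ := h ρ hρ0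
      have hxmem : x ∈ S' ∩ ball (0:E n) ρ := ⟨hx, mem_ball_zero_iff.2 (by
        have := norm_nonneg v; linarith)⟩
      obtain ⟨t, ht, hdt⟩ := mem_add_ball.1 (hTN.2 hxmem)
      have hfwd : ∀ s ∈ T, s + v ∈ T := by
        intro s hs
        have hs' : s ∈ tr v T := by rw [hTper]; exact hs
        exact mem_tr.1 hs'
      have hbwd : ∀ s ∈ T, s + -v ∈ T := by
        intro s hs
        have h1 : s - v ∈ tr v T := mem_tr.2 (by rw [sub_add_cancel]; exact hs)
        rw [hTper] at h1
        rw [← sub_eq_add_neg]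
        exact h1
      have htu : t + u ∈ T := by
        rcases hu with hu' | hu'
        · rw [hu']; exact hfwd t ht
        · rw [hu']; exact hbwd t ht
      have htnorm : ‖t + u‖ < ρ := by
        have h1 : ‖t‖ ≤ ‖x‖ + dist x t := by
          have hh := norm_le_norm_add_norm_sub' t x
          rw [norm_sub_rev t x, ← dist_eq_norm] at hh
          exact hh
        calc ‖t + u‖ ≤ ‖t‖ + ‖u‖ := norm_add_le _ _
        _ ≤ ‖x‖ + dist x t + ‖v‖ := by rw [hunorm]; linarith
        _ < ‖x‖ + 1/ρ + ‖v‖ := by linarith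
        _ ≤ ‖x‖ + 1 + ‖v‖ := by linarith
        _ < ρ := by linarith
      obtain ⟨s, hs, hds⟩ := mem_add_ball.1 (hTN.1 ⟨htu, mem_ball_zero_iff.2 htnorm⟩)
      refine ⟨s, hs, ?_⟩
      have heq : dist (x + u) (t + u) = dist x t := dist_add_right x t u
      calc dist (x + u) s ≤ dist (x + u) (t + u) + dist (t + u) s := dist_triangle _ _ _
      _ < 1/ρ + 1/ρ := by rw [heq]; linarith
      _ = 2/ρ := by ring
    set ρ1 : ℝ := ‖x‖ + ‖v‖ + 2 + 8/δ' with hρ1def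
    have hρ1big : ‖x‖ + ‖v‖ + 1 < ρ1 := by
      have : (0:ℝ) < 8/δ' := by positivity
      rw [hρ1def]; linarith
    have hρ1pos : (0:ℝ) < ρ1 := by
      have := norm_nonneg x; have := norm_nonneg v; linarith
    obtain ⟨s1, hs1, hd1⟩ := happrox ρ1 hρ1big
    have h8δ : (0:ℝ) < 8/δ' := by positivity
    have hbound1 : 2/ρ1 ≤ δ'/4 := by
      have hle : 8/δ' ≤ ρ1 := by
        have := norm_nonneg x; have := norm_nonneg v; rw [hρ1def]; linarith
      calc 2/ρ1 ≤ 2/(8/δ') := by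
            apply div_le_div_of_nonneg_left ?_ h8δ hle
            norm_num
      _ = δ'/4 := by field_simp; ring
    have hd1' : dist (x + u) s1 < δ'/4 := by linarith
    have hxu : x + u = s1 := by
      by_contra hne
      have hd0 : (0:ℝ) < dist (x + u) s1 := dist_pos.2 hne
      set d : ℝ := dist (x + u) s1 with hddef
      set ρ2 : ℝ := max ρ1 (4/d) with hρ2def
      have hρ2big : ‖x‖ + ‖v‖ + 1 < ρ2 := lt_of_lt_of_le hρ1big (le_max_left _ _)
      obtain ⟨s2, hs2, hd2⟩ := happrox ρ2 hρ2big
      have h4d : (0:ℝ) < 4/d := by positivity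
      have h2small : 2/ρ2 ≤ d/2 := by
        have hle : 4/d ≤ ρ2 := le_max_right _ _
        calc 2/ρ2 ≤ 2/(4/d) := by
              apply div_le_div_of_nonneg_left ?_ h4d hle
              norm_num
        _ = d/2 := by field_simp; ring
      have h2small' : 2/ρ2 ≤ δ'/4 := by
        have hle : ρ1 ≤ ρ2 := le_max_left _ _
        have : 2/ρ2 ≤ 2/ρ1 := by
          apply div_le_div_of_nonneg_left ?_ hρ1pos hle
          norm_num
        linarith
      have hs12 : s1 = s2 := by
        by_contra hss
        have hsepd := hsep s1 hs1 s2 hs2 hss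
        have : dist s1 s2 ≤ dist s1 (x + u) + dist (x + u) s2 := dist_triangle _ _ _
        rw [dist_comm s1 (x + u)] at this
        linarith
      rw [← hs12] at hd2
      linarith
    rw [hxu]
    exact hs1
  ext x
  rw [mem_tr]
  constructor
  · intro hxv
    have := hstep (x + v) hxv (-v) (Or.inr rfl)
    simpa using this
  · intro hx
    exact hstep x hx v (Or.inl rfl)

lemma tr_comp {a b : E n} {P : Set (E n)} (ha : tr a P = P) (hb : tr b P = P) :
    tr (a + b) P = P := by
  rw [← tr_tr, hb, ha]

lemma tr_neg {a : E n} {P : Set (E n)} (ha : tr a P = P) : tr (-a) P = P := by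
  have : tr (-a) (tr a P) = P := by
    rw [tr_tr, neg_add_cancel, tr_zero]
  rw [ha] at this
  exact this

/-- A set invariant under a scaled integer lattice is periodic. -/
lemma periodic_of_lattice {c : ℝ} (hc : 0 < c) {P : Set (E n)}
    (h : ∀ z : Fin n → ℤ, tr (WithLp.toLp 2 (fun j => c * (z j:ℝ))) P = P) : IsPeriodicSet P := by
  refine ⟨fun i => c • EuclideanSpace.single i (1:ℝ), ?_, ?_⟩
  · have h1 : LinearIndependent ℝ (fun i : Fin n => EuclideanSpace.single i (1:ℝ)) := by
      have hb := (EuclideanSpace.basisFun (Fin n) ℝ).toBasis.linearIndependent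
      have : ⇑(EuclideanSpace.basisFun (Fin n) ℝ).toBasis
          = fun i : Fin n => EuclideanSpace.single i (1:ℝ) := by
        ext i j
        rw [OrthonormalBasis.coe_toBasis, EuclideanSpace.basisFun_apply]
      rwa [this] at hb
    have h2 := h1.units_smul (fun _ : Fin n => Units.mk0 c hc.ne')
    have heq2 : ((fun _ : Fin n => Units.mk0 c hc.ne') •
          (fun i : Fin n => EuclideanSpace.single i (1:ℝ)))
        = fun i : Fin n => c • EuclideanSpace.single i (1:ℝ) := by
      funext i
      show (Units.mk0 c hc.ne') • EuclideanSpace.single i (1:ℝ)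
          = c • EuclideanSpace.single i (1:ℝ)
      rw [Units.smul_def]
      rfl
    rwa [heq2] at h2
  · intro i
    show tr (c • EuclideanSpace.single i (1:ℝ)) P = P
    have hz := h (fun j => if j = i then 1 else 0)
    simp only [Int.cast_ite, Int.cast_one, Int.cast_zero] at hz
    have heq : WithLp.toLp 2 (fun j => c * (if j = i then (1:ℝ) else 0))
        = (c • EuclideanSpace.single i (1:ℝ) : E n) := by
      ext j
      have hcoord : (c • EuclideanSpace.single i (1:ℝ) : E n) j
          = c * (EuclideanSpace.single i (1:ℝ) j) := rfl
      rw [hcoord, EuclideanSpace.single_apply]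
    rwa [heq] at hz

lemma tr_sub {a b : E n} {P : Set (E n)} (ha : tr a P = P) (hb : tr b P = P) :
    tr (a - b) P = P := by
  rw [sub_eq_add_neg]
  exact tr_comp ha (tr_neg hb)

/-- If every Delone set has period `v`, then `v` is a rational multiple of every
sufficiently large scale `c`. -/
lemma exists_int_multiple {ε δ : ℝ} (hδ : 0 < δ) (hεδ : δ ≤ ε) {S0 : Set (E n)}
    (hS0 : S0 ∈ Del n ε δ) {v : E n}
    (hall : ∀ S' ∈ Del n ε δ, tr v S' = S') {c : ℝ}
    (hc : 2*(1 + 2*ε + δ) + δ ≤ c) :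
    ∃ N : ℤ, N ≠ 0 ∧ ∀ j, ∃ m : ℤ, (N:ℝ) * v j = c * m := by
  have hε : 0 < ε := lt_of_lt_of_le hδ hεδ
  have hc0 : (0:ℝ) < c := by linarith
  obtain ⟨P, hPDel, hper, -⟩ := periodize hδ hεδ hS0 one_pos hc
  have hPv : tr v P = P := hall P hPDel
  obtain ⟨p, hp, -⟩ := hPDel.1 0
  -- natural multiples of v are periods
  have hnv : ∀ m : ℕ, tr ((m:ℝ) • v) P = P := by
    intro m
    induction m with
    | zero => simpa using (tr_zero : tr (0:E n) P = P)
    | succ k ih =>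
      have heq : (((k+1:ℕ)):ℝ) • v = v + (k:ℝ) • v := by
        push_cast
        rw [add_smul, one_smul]
        abel
      rw [heq]
      exact tr_comp hPv ih
  set f : ℕ → E n :=
    fun m => WithLp.toLp 2 (fun j => (m:ℝ) * v j - c * ((round ((m:ℝ) * v j / c) : ℤ) : ℝ)) with hf
  set lz : ℕ → E n := fun m => WithLp.toLp 2 (fun j => c * ((round ((m:ℝ) * v j / c) : ℤ) : ℝ)) with hlz
  have hsplit : ∀ m : ℕ, f m = (m:ℝ) • v - lz m := by
    intro m
    ext j
    show (m:ℝ) * v j - c * ((round ((m:ℝ) * v j / c) : ℤ) : ℝ)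
      = ((m:ℝ) • v) j - (lz m) j
    rfl
  have hfPer : ∀ m : ℕ, tr (f m) P = P := by
    intro m
    rw [hsplit m]
    apply tr_sub (hnv m)
    exact hper (fun j => round ((m:ℝ) * v j / c))
  have hcoordbd : ∀ y : ℝ, |y - c * ((round (y/c) : ℤ):ℝ)| ≤ c/2 := by
    intro y
    have h1 := abs_sub_round (y/c)
    have h2 : y - c * ((round (y/c):ℤ):ℝ) = c * (y/c - ((round (y/c):ℤ):ℝ)) := by
      field_simp
    rw [h2, abs_mul, abs_of_pos hc0]
    nlinarith [abs_nonneg (y/c - ((round (y/c):ℤ):ℝ))]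
  have hfbd : ∀ m : ℕ, ‖f m‖ ≤ (n:ℝ) * (c/2) := by
    intro m
    refine le_trans (norm_le_sum_coord (f m)) ?_
    have hcoord : ∀ j : Fin n, |(f m) j| ≤ c/2 := by
      intro j
      have : (f m) j = (m:ℝ) * v j - c * ((round ((m:ℝ) * v j / c) : ℤ):ℝ) := rfl
      rw [this]
      exact hcoordbd ((m:ℝ) * v j)
    calc ∑ j : Fin n, |(f m) j| ≤ ∑ _j : Fin n, c/2 :=
          Finset.sum_le_sum (fun j _ => hcoord j)
    _ = (n:ℝ) * (c/2) := by simp [mul_comm]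
  set Per : Set (E n) := {w | tr w P = P} with hPerdef
  have hPerSep : IsSeparated' δ Per := by
    intro w hw w' hw' hne
    have hu : tr (w - w') P = P := tr_sub hw hw'
    have hune : w - w' ≠ 0 := sub_ne_zero.2 hne
    have hpu : p - (w - w') ∈ P := by
      have h1 : p - (w - w') ∈ tr (w - w') P := mem_tr.2 (by
        rw [sub_add_cancel]; exact hp)
      rwa [hu] at h1
    have hne2 : p ≠ p - (w - w') := by
      intro h
      apply hune
      have := sub_eq_self.1 (congrArg (fun z => z) h).symm
      exact this
    have := hPDel.2 p hp (p - (w - w')) hpu hne2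
    have heq : dist p (p - (w - w')) = dist w w' := by
      rw [dist_eq_norm, dist_eq_norm]
      congr 1
      abel
    rwa [heq] at this
  set TT : Set (E n) := Per ∩ closedBall (0:E n) ((n:ℝ) * (c/2)) with hTT
  have hTTfin : TT.Finite :=
    finite_of_separated_bounded hδ (sep_mono hPerSep Set.inter_subset_left)
      Set.inter_subset_right
  have hmemTT : ∀ m : ℕ, f m ∈ TT :=
    fun m => ⟨hfPer m, by rw [mem_closedBall, dist_zero_right]; exact hfbd m⟩
  have : ∃ m m' : ℕ, m ≠ m' ∧ f m = f m' := by
    haveI : Finite ↥TT := Set.finite_coe_iff.2 hTTfin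
    obtain ⟨m, m', hne, heq⟩ :=
      Finite.exists_ne_map_eq_of_infinite (fun m : ℕ => (⟨f m, hmemTT m⟩ : ↥TT))
    exact ⟨m, m', hne, congrArg Subtype.val heq⟩
  obtain ⟨m, m', hne, heq⟩ := this
  refine ⟨(m:ℤ) - (m':ℤ), by
    intro h
    apply hne
    have := sub_eq_zero.1 h
    exact_mod_cast this, ?_⟩
  intro j
  refine ⟨round ((m:ℝ) * v j / c) - round (((m':ℕ):ℝ) * v j / c), ?_⟩
  have hj := congrArg (fun w : E n => w j) heq
  have hfj : ∀ mm : ℕ, (f mm) j = (mm:ℝ) * v j - c * ((round ((mm:ℝ) * v j / c) : ℤ):ℝ) :=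
    fun mm => rfl
  rw [hfj m, hfj m'] at hj
  push_cast
  nlinarith [hj]

/-- Membership in all `FF` sets gives a dense orbit. -/
lemma hull_of_mem_all {ε δ : ℝ} (hδ : 0 < δ) {S : Set (E n)}
    (hF : ∀ i : Finset (Fin n → ℚ) × ℕ × ℕ, S ∈ FF n ε δ i) :
    ∀ S' ∈ Del n ε δ, InHull S S' := by
  intro S' hS' t ht
  set m : ℕ := ⌈2*t⌉₊ with hmdef
  have hm : 2*t + 1 ≤ (m:ℝ) + 1 := by
    have := Nat.le_ceil (2*t)
    rw [hmdef]
    push_cast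
    linarith
  set τ : ℝ := 2*t + 1 with hτdef
  set k : ℕ := ⌈2*τ⌉₊ with hkdef
  have hk : 2*τ ≤ (k:ℝ) := by
    have := Nat.le_ceil (2*τ)
    rw [hkdef]
    push_cast
    linarith
  obtain ⟨A, hA⟩ := good_exists hδ hS' k
  have hex : ∃ D, GoodD n ε δ A k D := ⟨S', hA⟩
  have hFi := hF (A, k, m)
  rw [FF] at hFi
  rw [if_pos hex] at hFi
  obtain ⟨-, v, ρ, hρ, hN⟩ := hFi
  have hD := theD_good hex
  have hmpos : (0:ℝ) < (m:ℝ) + 1 := by positivity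
  have h1 : Nrel n ((m:ℝ)+1) (tr v S) (theD n ε δ A k) := nrel_mono hmpos hρ.le hN
  have h2 : Nrel n τ (theD n ε δ A k) S' :=
    good_good_nrel hD hA (by rw [hτdef]; linarith) hk
  exact ⟨v, nrel_comp ht hm (le_refl τ) h1 h2⟩

end ChaoticAux


open ChaoticAux in
/-- Being chaotic (aperiodic and almost chaotic) is generic in `Del_{ε,δ}` for `ε ≥ δ > 0`. -/
theorem chaotic_generic (n : ℕ) (ε δ : ℝ) (hδ : 0 < δ) (hεδ : δ ≤ ε) :
    ∃ F : ℕ → Set (Set (EuclideanSpace ℝ (Fin n))),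
      (∀ k, F k ⊆ Del n ε δ ∧ IsOpenInDel n ε δ (F k) ∧ IsDenseInDel n ε δ (F k)) ∧
      ∀ S, (∀ k, S ∈ F k) →
        S ∈ Del n ε δ ∧ IsAlmostChaotic ε δ S ∧ IsAperiodicSet S := by
  have hε : 0 < ε := lt_of_lt_of_le hδ hεδ
  obtain ⟨e, he⟩ := exists_surjective_nat (Finset (Fin n → ℚ) × ℕ × ℕ)
  refine ⟨fun k => FF n ε δ (e k),
    fun k => ⟨FF_subset _, FF_open _, FF_dense hδ hεδ _⟩, ?_⟩
  intro S hS
  have hall : ∀ i, S ∈ FF n ε δ i := by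
    intro i
    obtain ⟨k, rfl⟩ := he i
    exact hS k
  have hSDel : S ∈ Del n ε δ := FF_subset (e 0) (hS 0)
  have hhull := hull_of_mem_all hδ hall
  refine ⟨hSDel, ?_, ?_⟩
  · -- almost chaotic
    intro S' hS' _ r hr
    obtain ⟨P, hPDel, hper, hNr⟩ := periodize hδ hεδ hS' hr
      (le_refl (2*(r + 2*ε + δ) + δ))
    exact ⟨P, hPDel, periodic_of_lattice (by linarith) hper, hhull P hPDel, hNr⟩
  · -- aperiodic
    intro v hv htr
    have hallper : ∀ S' ∈ Del n ε δ, tr v S' = S' := by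
      intro S' hS'
      apply period_of_limit hδ hS'.2
      intro ρ hρ
      obtain ⟨w, hw⟩ := hhull S' hS' ρ hρ
      have hcomm : tr v (tr w S) = tr w S := by
        rw [tr_tr, add_comm, ← tr_tr, htr]
      exact ⟨tr w S, hcomm, hw⟩
    set c1 : ℝ := 2*(1 + 2*ε + δ) + δ with hc1def
    have hc1 : (0:ℝ) < c1 := by rw [hc1def]; linarith
    obtain ⟨N1, hN1, hm1⟩ := exists_int_multiple hδ hεδ hSDel hallper (le_refl c1)
    have hsqrt2 : (1:ℝ) ≤ Real.sqrt 2 := by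
      rw [show (1:ℝ) = Real.sqrt 1 by simp]
      exact Real.sqrt_le_sqrt (by norm_num)
    obtain ⟨N2, hN2, hm2⟩ := exists_int_multiple hδ hεδ hSDel hallper
      (show c1 ≤ c1 * Real.sqrt 2 by nlinarith)
    obtain ⟨j, hj⟩ : ∃ j, v j ≠ 0 := by
      by_contra hvv
      push_neg at hvv
      exact hv (by ext j; exact hvv j)
    obtain ⟨k1, hk1⟩ := hm1 j
    obtain ⟨k2, hk2⟩ := hm2 j
    have hN1r : ((N1:ℤ):ℝ) ≠ 0 := Int.cast_ne_zero.2 hN1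
    have hN2r : ((N2:ℤ):ℝ) ≠ 0 := Int.cast_ne_zero.2 hN2
    have hsq0 : (0:ℝ) < Real.sqrt 2 := by linarith
    have hk1ne : ((k1:ℤ):ℝ) ≠ 0 := by
      intro h0
      rw [h0, mul_zero] at hk1
      rcases mul_eq_zero.1 hk1 with h | h
      · exact hN1r h
      · exact hj h
    have hk2ne : ((k2:ℤ):ℝ) ≠ 0 := by
      intro h0
      rw [h0, mul_zero] at hk2
      rcases mul_eq_zero.1 hk2 with h | h
      · exact hN2r h
      · exact hj h
    have hkey : Real.sqrt 2 * (((N1:ℤ):ℝ) * ((k2:ℤ):ℝ)) = ((N2:ℤ):ℝ) * ((k1:ℤ):ℝ) := by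
      have h3 : c1 * (((N2:ℤ):ℝ) * ((k1:ℤ):ℝ))
          = c1 * (Real.sqrt 2 * (((N1:ℤ):ℝ) * ((k2:ℤ):ℝ))) := by
        linear_combination ((N1:ℤ):ℝ) * hk2 - ((N2:ℤ):ℝ) * hk1
      exact (mul_left_cancel₀ (ne_of_gt hc1) h3).symm
    have hden : ((N1:ℤ):ℝ) * ((k2:ℤ):ℝ) ≠ 0 := mul_ne_zero hN1r hk2ne
    apply irrational_sqrt_two
    refine ⟨((N2 * k1 : ℤ):ℚ) / ((N1 * k2 : ℤ):ℚ), ?_⟩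
    push_cast
    rw [div_eq_iff hden]
    linarith [hkey]
end
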